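/- arXiv:1708.02712 — 5 statements merged into one kernel-verified Lean document; each statement's English description precedes it below -/
import Mathlib

section
/- Let B : [0,∞) → ℝ be a continuous function with B(0) = 0, let a ∈ ℝ, σ > 0, x₀ > 0, and let Y : [0,∞) → ℝ be a continuous function satisfying Y(t) = √x₀ + a∫₀ᵗ Y(s) ds + σ B(t) for all t ≥ 0. Let τ := inf{t > 0 : Y(t) = 0} (with inf ∅ = +∞), fix t with 0 < t < τ, and set X(s) := Y(s)² for s ∈ [0,t]. Then for every sequence of partitions 0 = t₀ⁿ < t₁ⁿ < … < t_{kₙ}ⁿ = t of [0,t] whose mesh tends to 0, the Stratonovich sums Sₙ := Σ_{k=1}^{kₙ} ((√X(t_kⁿ) + √X(t_{k−1}ⁿ))/2)·(B(t_kⁿ) − B(t_{k−1}ⁿ)) converge to (X(t) − x₀ − 2a∫₀ᵗ X(s) ds)/(2σ). In other words, the pathwise Stratonovich integral ∫₀ᵗ √X(s) ∘ dB(s) exists and X(t) = x₀ + 2a∫₀ᵗ X(s) ds + 2σ ∫₀ᵗ √X(s) ∘ dB(s). -/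
open MeasureTheory Filter Set

lemma fin_telescope (m : ℕ) (g : Fin (m+1) → ℝ) :
    ∑ i : Fin m, (g i.succ - g i.castSucc) = g (Fin.last m) - g 0 := by
  induction m with
  | zero => simp
  | succ m ih =>
    rw [Fin.sum_univ_castSucc]
    have := ih (g ∘ Fin.castSucc)
    simp only [Function.comp] at this
    simp only [Fin.succ_castSucc] at this ⊢
    rw [show ∑ i : Fin m, (g i.succ.castSucc - g i.castSucc.castSucc)
        = g (Fin.last m).castSucc - g 0 from by
      simpa only [Fin.castSucc_zero] using this]
    simp [Fin.succ_last]

/-- Let `B : [0,∞) → ℝ` be continuous with `B 0 = 0`, and let `Y` be a continuous solution of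
`Y t = √x₀ + a ∫₀ᵗ Y + σ B t` on `[0,∞)`. Let `τ = inf{t > 0 : Y t = 0}` (`= +∞` if the set is
empty), fix `0 < t < τ` and set `X s = (Y s)²`. Then along any sequence of partitions of `[0,t]`
with mesh tending to `0`, the Stratonovich sums
`Σ ((√X(t_k) + √X(t_{k-1}))/2)(B(t_k) − B(t_{k-1}))` converge to
`(X t − x₀ − 2a ∫₀ᵗ X)/(2σ)`; i.e. `∫₀ᵗ √X ∘ dB` exists pathwise and
`X t = x₀ + 2a ∫₀ᵗ X ds + 2σ ∫₀ᵗ √X ∘ dB`. -/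
theorem stratonovich_sums_of_squared_OU_converge
    (B Y : ℝ → ℝ) (a σ x₀ : ℝ) (hσ : 0 < σ) (hx₀ : 0 < x₀)
    (hBcont : ContinuousOn B (Set.Ici 0)) (hB0 : B 0 = 0)
    (hYcont : ContinuousOn Y (Set.Ici 0))
    (hYeq : ∀ t ≥ (0:ℝ), Y t = Real.sqrt x₀ + a * (∫ s in (0:ℝ)..t, Y s) + σ * B t)
    (t : ℝ) (ht : 0 < t)
    (htτ : (t : EReal) < sInf {x : EReal | ∃ s : ℝ, 0 < s ∧ Y s = 0 ∧ x = (s : ℝ)})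
    (X : ℝ → ℝ) (hX : ∀ s, X s = (Y s) ^ 2)
    (k : ℕ → ℕ) (p : (n : ℕ) → Fin (k n + 1) → ℝ)
    (hmono : ∀ n, StrictMono (p n))
    (hfirst : ∀ n, p n 0 = 0)
    (hlast : ∀ n, p n (Fin.last (k n)) = t)
    (hmesh : Filter.Tendsto
      (fun n => ⨆ i : Fin (k n), (p n i.succ - p n i.castSucc))
      Filter.atTop (nhds 0)) :
    Filter.Tendsto
      (fun n => ∑ i : Fin (k n),
        (Real.sqrt (X (p n i.succ)) + Real.sqrt (X (p n i.castSucc))) / 2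
          * (B (p n i.succ) - B (p n i.castSucc)))
      Filter.atTop
      (nhds ((X t - x₀ - 2 * a * ∫ s in (0:ℝ)..t, X s) / (2 * σ))) := by
  have hIccIci : Icc (0:ℝ) t ⊆ Ici 0 := fun x hx => hx.1
  -- Y 0 = √x₀ > 0
  have hY0 : Y 0 = Real.sqrt x₀ := by simpa [hB0] using hYeq 0 le_rfl
  have hY0pos : 0 < Y 0 := by rw [hY0]; exact Real.sqrt_pos.2 hx₀
  -- Y > 0 on [0, t]
  have hYpos : ∀ s ∈ Icc (0:ℝ) t, 0 < Y s := by
    intro s hs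
    by_contra h
    push_neg at h
    have hsub : Icc (0:ℝ) s ⊆ Ici 0 := fun x hx => hx.1
    obtain ⟨c, hc, hYc⟩ :=
      intermediate_value_Icc' hs.1 (hYcont.mono hsub) ⟨h, hY0pos.le⟩
    have hc0 : 0 < c := by
      rcases hc.1.lt_or_eq with h' | h'
      · exact h'
      · exfalso; rw [← h'] at hYc; exact hY0pos.ne' hYc
    have h1 : sInf {x : EReal | ∃ s : ℝ, 0 < s ∧ Y s = 0 ∧ x = (s : ℝ)} ≤ (c : EReal) :=
      sInf_le ⟨c, hc0, hYc, rfl⟩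
    have h2 : (t : EReal) < (c : EReal) := lt_of_lt_of_le htτ h1
    have h3 : t < c := by exact_mod_cast h2
    linarith [hc.2, hs.2]
  have hsqrt : ∀ s ∈ Icc (0:ℝ) t, Real.sqrt (X s) = Y s := fun s hs => by
    rw [hX, Real.sqrt_sq (hYpos s hs).le]
  -- interval integrability of Y and Y^2 between points of [0,t]
  have hsubuIcc : ∀ u ∈ Icc (0:ℝ) t, ∀ v ∈ Icc (0:ℝ) t, uIcc u v ⊆ Icc 0 t := by
    intro u hu v hv
    rw [← uIcc_of_le ht.le]
    exact uIcc_subset_uIcc (by rwa [uIcc_of_le ht.le]) (by rwa [uIcc_of_le ht.le])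
  have hYI : ∀ u ∈ Icc (0:ℝ) t, ∀ v ∈ Icc (0:ℝ) t, IntervalIntegrable Y volume u v :=
    fun u hu v hv => (hYcont.mono ((hsubuIcc u hu v hv).trans hIccIci)).intervalIntegrable
  have hY2I : ∀ u ∈ Icc (0:ℝ) t, ∀ v ∈ Icc (0:ℝ) t,
      IntervalIntegrable (fun s => (Y s)^2) volume u v :=
    fun u hu v hv =>
      ((hYcont.pow 2).mono ((hsubuIcc u hu v hv).trans hIccIci)).intervalIntegrable
  have h0t : (0:ℝ) ∈ Icc (0:ℝ) t := ⟨le_rfl, ht.le⟩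
  have htt : t ∈ Icc (0:ℝ) t := ⟨ht.le, le_rfl⟩
  -- B difference formula
  have hBdiff : ∀ u ∈ Icc (0:ℝ) t, ∀ v ∈ Icc (0:ℝ) t,
      B u - B v = ((Y u - Y v) - a * ∫ s in v..u, Y s) / σ := by
    intro u hu v hv
    have h1 := hYeq u hu.1
    have h2 := hYeq v hv.1
    have h3 : (∫ s in (0:ℝ)..u, Y s) - ∫ s in (0:ℝ)..v, Y s = ∫ s in v..u, Y s :=
      intervalIntegral.integral_interval_sub_left (hYI 0 h0t u hu) (hYI 0 h0t v hv)
    rw [eq_div_iff hσ.ne']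
    linear_combination h2 - h1 - a * h3
  -- membership of partition points
  have hmem : ∀ n, ∀ i : Fin (k n + 1), p n i ∈ Icc (0:ℝ) t := by
    intro n i
    constructor
    · rw [← hfirst n]; exact (hmono n).monotone (Fin.zero_le i)
    · rw [← hlast n]; exact (hmono n).monotone (Fin.le_last i)
  have hkpos : ∀ n, 0 < k n := by
    intro n
    rcases Nat.eq_zero_or_pos (k n) with h | h
    · exfalso
      have he : (0 : Fin (k n + 1)) = Fin.last (k n) := Fin.ext (by simp [h])
      have : (0:ℝ) = t := by rw [← hfirst n, he, hlast n]
      linarith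
    · exact h
  -- the modified sums
  set R : ℕ → ℝ := fun n => ∑ i : Fin (k n),
    ((Y (p n i.succ) + Y (p n i.castSucc)) / 2) *
      ∫ s in (p n i.castSucc)..(p n i.succ), Y s with hR_def
  have key : ∀ n, (∑ i : Fin (k n),
      (Real.sqrt (X (p n i.succ)) + Real.sqrt (X (p n i.castSucc))) / 2
        * (B (p n i.succ) - B (p n i.castSucc)))
      = ((X t - x₀) / 2 - a * R n) / σ := by
    intro n
    have step1 : ∀ i : Fin (k n),
        (Real.sqrt (X (p n i.succ)) + Real.sqrt (X (p n i.castSucc))) / 2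
          * (B (p n i.succ) - B (p n i.castSucc))
        = (((Y (p n i.succ))^2/2 - (Y (p n i.castSucc))^2/2)
            - a * (((Y (p n i.succ) + Y (p n i.castSucc)) / 2) *
              ∫ s in (p n i.castSucc)..(p n i.succ), Y s)) / σ := by
      intro i
      rw [hsqrt _ (hmem n i.succ), hsqrt _ (hmem n i.castSucc),
        hBdiff _ (hmem n i.succ) _ (hmem n i.castSucc)]
      field_simp
      ring
    rw [Finset.sum_congr rfl (fun i _ => step1 i), ← Finset.sum_div,
      Finset.sum_sub_distrib, ← Finset.mul_sum]
    congr 2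
    have := fin_telescope (k n) (fun i => (Y (p n i))^2/2)
    rw [this, hlast n, hfirst n, hY0, Real.sq_sqrt hx₀.le, hX t]
    ring
  -- convergence of R to ∫ Y^2
  have hI : (∫ s in (0:ℝ)..t, X s) = ∫ s in (0:ℝ)..t, (Y s)^2 := by
    simp only [hX]
  have hRlim : Tendsto R atTop (nhds (∫ s in (0:ℝ)..t, (Y s)^2)) := by
    obtain ⟨M, hM⟩ := isCompact_Icc.exists_bound_of_continuousOn (hYcont.mono hIccIci)
    have hM0 : 0 ≤ M := le_trans (norm_nonneg _) (hM 0 h0t)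
    have hUC := isCompact_Icc.uniformContinuousOn_of_continuous (hYcont.mono hIccIci)
    rw [Metric.uniformContinuousOn_iff] at hUC
    rw [Metric.tendsto_atTop]
    intro ε hε
    set ε' : ℝ := ε / ((M + 1) * (t + 1)) with hε'_def
    have hε'pos : 0 < ε' := div_pos hε (by positivity)
    obtain ⟨δ, hδpos, hδ⟩ := hUC ε' hε'pos
    obtain ⟨N, hN⟩ := eventually_atTop.1 (hmesh.eventually_lt_const hδpos)
    refine ⟨N, fun n hn => ?_⟩
    have hsup := hN n hn
    have hgap : ∀ i : Fin (k n), p n i.succ - p n i.castSucc < δ := by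
      intro i
      refine lt_of_le_of_lt ?_ hsup
      haveI : Nonempty (Fin (k n)) := ⟨⟨0, hkpos n⟩⟩
      exact le_ciSup (f := fun i : Fin (k n) => p n i.succ - p n i.castSucc) (Set.Finite.bddAbove (Set.finite_range _)) i
    -- split the integral along the partition
    have hIsplit : (∫ s in (0:ℝ)..t, (Y s)^2)
        = ∑ i : Fin (k n), ∫ s in (p n i.castSucc)..(p n i.succ), (Y s)^2 := by
      set m := k n with hm
      set aseq : ℕ → ℝ := fun j => p n ⟨min j m, Nat.lt_succ_of_le (min_le_right _ _)⟩ with ha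
      have hcs : ∀ i : Fin m, aseq i.val = p n i.castSucc := by
        intro i
        show p n _ = p n i.castSucc
        congr 1
        exact Fin.ext (by simp [Nat.min_eq_left i.isLt.le])
      have hsc : ∀ i : Fin m, aseq (i.val + 1) = p n i.succ := by
        intro i
        show p n _ = p n i.succ
        congr 1
        exact Fin.ext (by simp [Nat.min_eq_left i.isLt])
      have hint : ∀ j < m, IntervalIntegrable (fun s => (Y s)^2) volume (aseq j) (aseq (j+1)) :=
        fun j _ => hY2I _ (hmem n _) _ (hmem n _)
      have h0 : aseq 0 = 0 := by
        show p n _ = 0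
        rw [show (⟨min 0 m, Nat.lt_succ_of_le (min_le_right _ _)⟩ : Fin (m+1)) = 0 from
          Fin.ext (by simp)]
        exact hfirst n
      have hmm : aseq m = t := by
        show p n _ = t
        rw [show (⟨min m m, Nat.lt_succ_of_le (min_le_right _ _)⟩ : Fin (m+1)) = Fin.last m from
          Fin.ext (by simp)]
        exact hlast n
      calc (∫ s in (0:ℝ)..t, (Y s)^2) = ∫ s in (aseq 0)..(aseq m), (Y s)^2 := by rw [h0, hmm]
        _ = ∑ j ∈ Finset.range m, ∫ s in (aseq j)..(aseq (j+1)), (Y s)^2 :=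
            (intervalIntegral.sum_integral_adjacent_intervals hint).symm
        _ = ∑ i : Fin m, ∫ s in (aseq i.val)..(aseq (i.val+1)), (Y s)^2 :=
            (Fin.sum_univ_eq_sum_range (fun j => ∫ s in (aseq j)..(aseq (j+1)), (Y s)^2) m).symm
        _ = ∑ i : Fin m, ∫ s in (p n i.castSucc)..(p n i.succ), (Y s)^2 := by
            refine Finset.sum_congr rfl fun i _ => ?_
            rw [hcs i, hsc i]
    -- rewrite the difference
    have hdiff : R n - (∫ s in (0:ℝ)..t, (Y s)^2)
        = ∑ i : Fin (k n), ∫ s in (p n i.castSucc)..(p n i.succ),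
            (((Y (p n i.succ) + Y (p n i.castSucc)) / 2) * Y s - (Y s)^2) := by
      rw [hIsplit, hR_def, ← Finset.sum_sub_distrib]
      refine Finset.sum_congr rfl fun i _ => ?_
      rw [← intervalIntegral.integral_const_mul]
      exact (intervalIntegral.integral_sub
        ((hYI _ (hmem n _) _ (hmem n _)).const_mul _) (hY2I _ (hmem n _) _ (hmem n _))).symm
    rw [Real.dist_eq, hdiff]
    -- bound each term
    have hbound : ∀ i : Fin (k n),
        |∫ s in (p n i.castSucc)..(p n i.succ),
            (((Y (p n i.succ) + Y (p n i.castSucc)) / 2) * Y s - (Y s)^2)|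
          ≤ ε' * M * (p n i.succ - p n i.castSucc) := by
      intro i
      set u := p n i.succ
      set v := p n i.castSucc
      have hvu : v < u := hmono n (show i.castSucc < i.succ from Fin.castSucc_lt_succ)
      have hptwise : ∀ x ∈ Set.uIoc v u,
          ‖((Y u + Y v) / 2) * Y x - (Y x)^2‖ ≤ ε' * M := by
        intro x hx
        rw [uIoc_of_le hvu.le] at hx
        have hxIcc : x ∈ Icc (0:ℝ) t :=
          ⟨(hmem n i.castSucc).1.trans hx.1.le, hx.2.trans (hmem n i.succ).2⟩
        have hdu : dist u x < δ := by
          rw [Real.dist_eq, abs_of_nonneg (by linarith [hx.2] : (0:ℝ) ≤ u - x)]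
          linarith [hx.1, hgap i]
        have hdv : dist v x < δ := by
          rw [Real.dist_eq, abs_of_nonpos (by linarith [hx.1] : v - x ≤ 0)]
          linarith [hx.2, hgap i]
        have h1 : |Y u - Y x| < ε' := by
          have := hδ u (hmem n i.succ) x hxIcc hdu
          rwa [Real.dist_eq] at this
        have h2 : |Y v - Y x| < ε' := by
          have := hδ v (hmem n i.castSucc) x hxIcc hdv
          rwa [Real.dist_eq] at this
        have hfac : ((Y u + Y v) / 2) * Y x - (Y x)^2
            = ((Y u + Y v) / 2 - Y x) * Y x := by ring
        rw [Real.norm_eq_abs, hfac, abs_mul]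
        have hc : |(Y u + Y v) / 2 - Y x| ≤ ε' := by
          have h3 := abs_add_le (Y u - Y x) (Y v - Y x)
          have h4 : |(Y u + Y v) / 2 - Y x| = |(Y u - Y x) + (Y v - Y x)| / 2 := by
            rw [show (Y u + Y v) / 2 - Y x = ((Y u - Y x) + (Y v - Y x)) / 2 from by ring,
              abs_div, abs_two]
          rw [h4]
          linarith
        exact mul_le_mul hc (by simpa using hM x hxIcc) (abs_nonneg _) hε'pos.le
      have := intervalIntegral.norm_integral_le_of_norm_le_const hptwise
      rw [Real.norm_eq_abs] at this
      calc |∫ s in v..u, (((Y u + Y v) / 2) * Y s - (Y s)^2)|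
          ≤ ε' * M * |u - v| := this
        _ = ε' * M * (u - v) := by rw [abs_of_nonneg (by linarith : (0:ℝ) ≤ u - v)]
    calc |∑ i : Fin (k n), ∫ s in (p n i.castSucc)..(p n i.succ),
            (((Y (p n i.succ) + Y (p n i.castSucc)) / 2) * Y s - (Y s)^2)|
        ≤ ∑ i : Fin (k n), |∫ s in (p n i.castSucc)..(p n i.succ),
            (((Y (p n i.succ) + Y (p n i.castSucc)) / 2) * Y s - (Y s)^2)| :=
          Finset.abs_sum_le_sum_abs _ _
      _ ≤ ∑ i : Fin (k n), ε' * M * (p n i.succ - p n i.castSucc) :=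
          Finset.sum_le_sum fun i _ => hbound i
      _ = ε' * M * t := by
          rw [← Finset.mul_sum]
          have := fin_telescope (k n) (p n)
          rw [this, hlast n, hfirst n, sub_zero]
      _ < ε := by
          rw [hε'_def]
          rw [div_mul_eq_mul_div, div_mul_eq_mul_div, div_lt_iff₀ (by positivity)]
          nlinarith
  have hfinal : Tendsto (fun n => ((X t - x₀) / 2 - a * R n) / σ) atTop
      (nhds (((X t - x₀) / 2 - a * ∫ s in (0:ℝ)..t, (Y s)^2) / σ)) :=
    ((hRlim.const_mul a).const_sub _).div_const σ
  have hval : ((X t - x₀) / 2 - a * ∫ s in (0:ℝ)..t, (Y s)^2) / σ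
      = (X t - x₀ - 2 * a * ∫ s in (0:ℝ)..t, X s) / (2 * σ) := by
    rw [hI]; field_simp
  rw [← hval]
  exact hfinal.congr (fun n => (key n).symm)
end

section
/- Let H ∈ (0,1), let B^H be a fractional Brownian motion with Hurst parameter H on a probability space (Ω, F, P), let a < 0, and set J_t := e^{−at} B^H_t + a ∫₀ᵗ e^{−as} B^H_s ds (a pathwise integral, defined using the almost sure continuity of the sample paths). Then P( limsup_{t→∞} J_t = +∞ ) = 1. -/
open MeasureTheory ProbabilityTheory Filter Set

noncomputable section

/-- The covariance function of fractional Brownian motion with Hurst parameter `H`: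
`ρ_H(t,s) = (t^{2H} + s^{2H} − |t−s|^{2H})/2`. -/
def fbmCov (H t s : ℝ) : ℝ := (t ^ (2 * H) + s ^ (2 * H) - |t - s| ^ (2 * H)) / 2

/-- A process `B` is a fractional Brownian motion with Hurst parameter `H` under the
probability measure `P` if `B 0 = 0`, almost all sample paths are continuous on `[0,∞)`,
and every finite linear combination `Σ cᵢ B_{tᵢ}` (with `tᵢ ≥ 0`) is a centered Gaussian
random variable with variance `Σᵢⱼ cᵢ cⱼ ρ_H(tᵢ,tⱼ)`. -/
structure IsFractionalBrownianMotion {Ω : Type*} [MeasurableSpace Ω] (P : Measure Ω)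
    (H : ℝ) (B : ℝ → Ω → ℝ) : Prop where
  init : ∀ ω, B 0 ω = 0
  cont : ∀ᵐ ω ∂P, ContinuousOn (fun t => B t ω) (Set.Ici 0)
  gaussian : ∀ (n : ℕ) (t : Fin n → ℝ) (c : Fin n → ℝ), (∀ i, 0 ≤ t i) →
    Measure.map (fun ω => ∑ i, c i * B (t i) ω) P =
      gaussianReal 0 (∑ i, ∑ j, c i * c j * fbmCov H (t i) (t j)).toNNReal

/-- The pathwise integral `J_t = e^{−at} B_t + a ∫₀ᵗ e^{−as} B_s ds`. -/
def fbmJ {Ω : Type*} (a : ℝ) (B : ℝ → Ω → ℝ) (t : ℝ) (ω : Ω) : ℝ :=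
  Real.exp (-(a * t)) * B t ω + a * ∫ s in (0:ℝ)..t, Real.exp (-(a * s)) * B s ω

end


set_option linter.unusedSectionVars false
set_option linter.unusedVariables false

section Aux

open scoped NNReal ENNReal


lemma exp_mul_gaussianPDFReal (v : ℝ≥0) (hv : v ≠ 0) (x : ℝ) :
    Real.exp x * gaussianPDFReal 0 v x = Real.exp (v / 2) * gaussianPDFReal v v x := by
  have hv' : (0:ℝ) < v := NNReal.coe_pos.mpr (pos_iff_ne_zero.mpr hv)
  simp only [gaussianPDFReal]
  rw [show Real.exp x * ((√(2 * Real.pi * (v:ℝ)))⁻¹ * Real.exp (-(x - 0) ^ 2 / (2 * (v:ℝ))))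
      = (√(2 * Real.pi * (v:ℝ)))⁻¹ * Real.exp (x + -(x - 0) ^ 2 / (2 * (v:ℝ))) by
    rw [Real.exp_add]; ring]
  rw [show Real.exp ((v:ℝ) / 2) * ((√(2 * Real.pi * (v:ℝ)))⁻¹ * Real.exp (-(x - (v:ℝ)) ^ 2 / (2 * (v:ℝ))))
      = (√(2 * Real.pi * (v:ℝ)))⁻¹ * Real.exp ((v:ℝ)/2 + -(x - (v:ℝ)) ^ 2 / (2 * (v:ℝ))) by
    rw [Real.exp_add]; ring]
  congr 1
  field_simp
  ring

lemma smul_pdf_eq (v : ℝ≥0) (hv : v ≠ 0) :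
    (fun x => (gaussianPDFReal 0 v x).toNNReal • Real.exp x)
      = fun x => Real.exp (v/2) * gaussianPDFReal v v x := by
  ext x
  have h : ((gaussianPDFReal 0 v x).toNNReal : ℝ) = gaussianPDFReal 0 v x :=
    Real.coe_toNNReal _ (gaussianPDFReal_nonneg 0 v x)
  rw [NNReal.smul_def, h, smul_eq_mul, mul_comm]
  exact exp_mul_gaussianPDFReal v hv x

lemma integrable_exp_gaussianReal (v : ℝ≥0) :
    Integrable Real.exp (gaussianReal 0 v) := by
  by_cases hv : v = 0
  · rw [hv, gaussianReal_zero_var]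
    exact (integrable_const (Real.exp 0)).congr (ae_eq_dirac Real.exp).symm
  rw [gaussianReal_of_var_ne_zero _ hv]
  have h : (gaussianPDF 0 v) = fun x => ((fun x => (gaussianPDFReal 0 v x).toNNReal) x : ℝ≥0∞) := rfl
  rw [h, integrable_withDensity_iff_integrable_smul
    ((measurable_gaussianPDFReal 0 v).real_toNNReal)]
  rw [smul_pdf_eq v hv]
  exact (integrable_gaussianPDFReal v v).const_mul _

lemma integral_exp_gaussianReal (v : ℝ≥0) :
    ∫ x, Real.exp x ∂(gaussianReal 0 v) = Real.exp (v / 2) := by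
  by_cases hv : v = 0
  · rw [hv, gaussianReal_zero_var, integral_dirac]
    simp [hv]
  rw [gaussianReal_of_var_ne_zero _ hv]
  have h : (gaussianPDF 0 v) = fun x => ((fun x => (gaussianPDFReal 0 v x).toNNReal) x : ℝ≥0∞) := rfl
  rw [h, integral_withDensity_eq_integral_smul ((measurable_gaussianPDFReal 0 v).real_toNNReal)]
  rw [smul_pdf_eq v hv, integral_const_mul, integral_gaussianPDFReal_eq_one _ hv, mul_one]

variable {H s t x : ℝ}

lemma fbmCov_symm : fbmCov H s t = fbmCov H t s := by
  simp [fbmCov, abs_sub_comm]; ring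

lemma fbmCov_self (hH : H ≠ 0) : fbmCov H t t = t ^ (2 * H) := by
  have : (2:ℝ) * H ≠ 0 := by simp [hH]
  simp [fbmCov, Real.zero_rpow this]

lemma fbmCov_nonneg (hH : 0 < H) (hs : 0 ≤ s) (hst : s ≤ t) : 0 ≤ fbmCov H s t := by
  have h1 : |s - t| ^ (2*H) ≤ t ^ (2*H) := by
    apply Real.rpow_le_rpow (abs_nonneg _) _ (by positivity)
    rw [abs_sub_comm, abs_of_nonneg (by linarith)]
    linarith
  have h2 : (0:ℝ) ≤ s ^ (2*H) := Real.rpow_nonneg hs _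
  rw [fbmCov]
  linarith

lemma one_sub_rpow_le (hH0 : 0 < H) (hH1 : H < 1) (hx : 0 ≤ x) (hx1 : x ≤ 1) :
    1 - (1-x) ^ (2*H) ≤ 2*x := by
  rcases le_or_gt (2*H) 1 with h | h
  · have h1 : (1-x) ^ (1:ℝ) ≤ (1-x) ^ (2*H) :=
      Real.rpow_le_rpow_of_exponent_ge' (by linarith) (by linarith) (by positivity) h
    rw [Real.rpow_one] at h1
    linarith
  · have h1 : 1 + (2*H) * (-x) ≤ (1 + -x) ^ (2*H) :=
      one_add_mul_self_le_rpow_one_add (by linarith) h.le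
    have h2 : (2*H) * x ≤ 2 * x := by nlinarith
    have : (1:ℝ) + -x = 1 - x := by ring
    rw [this] at h1
    nlinarith

lemma fbmCov_le (hH0 : 0 < H) (hH1 : H < 1) (hs : 0 < s) (hst : s ≤ t) :
    fbmCov H s t ≤ ((s/t)^H/2 + (s/t)^(1-H)) * (s^H * t^H) := by
  have ht : 0 < t := lt_of_lt_of_le hs hst
  set x := s / t with hxdef
  have hx0 : 0 < x := div_pos hs ht
  have hx1 : x ≤ 1 := (div_le_one ht).mpr hst
  -- key: t^{2H} - (t-s)^{2H} ≤ 2 x t^{2H}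
  have hts : t - s = t * (1 - x) := by rw [hxdef]; field_simp
  have key : t ^ (2*H) - (t-s) ^ (2*H) ≤ 2 * x * t ^ (2*H) := by
    rw [hts, Real.mul_rpow ht.le (by linarith)]
    have := one_sub_rpow_le hH0 hH1 hx0.le hx1
    nlinarith [Real.rpow_nonneg ht.le (2*H), Real.rpow_nonneg (show (0:ℝ) ≤ 1 - x by linarith) (2*H)]
  have habs : |s - t| = t - s := by rw [abs_sub_comm, abs_of_nonneg (by linarith)]
  -- rewrite fbmCov
  have h1 : fbmCov H s t ≤ (s ^ (2*H) + 2 * x * t ^ (2*H)) / 2 := by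
    rw [fbmCov, habs]; linarith
  refine h1.trans (le_of_eq ?_)
  -- algebraic identity
  have e1 : s ^ (2*H) = (s^H) * (s^H) := by
    rw [← Real.rpow_add hs]; ring_nf
  have e2 : (x:ℝ)^H = s^H / t^H := by
    rw [hxdef, Real.div_rpow hs.le ht.le]
  have e3 : (x:ℝ)^(1-H) = (s / s^H) / (t / t^H) := by
    rw [hxdef, Real.div_rpow hs.le ht.le]
    congr 1
    · rw [Real.rpow_sub hs, Real.rpow_one]
    · rw [Real.rpow_sub ht, Real.rpow_one]
  have e4 : t ^ (2*H) = (t^H) * (t^H) := by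
    rw [← Real.rpow_add ht]; ring_nf
  have hsH : (0:ℝ) < s^H := Real.rpow_pos_of_pos hs H
  have htH : (0:ℝ) < t^H := Real.rpow_pos_of_pos ht H
  rw [e2, e3, e1, e4, hxdef]
  field_simp

lemma exists_ratio_bound (hH0 : 0 < H) (hH1 : H < 1) {ε : ℝ} (hε : 0 < ε) :
    ∃ x₀ : ℝ, 0 < x₀ ∧ x₀ ≤ 1/2 ∧ ∀ x : ℝ, 0 < x → x ≤ x₀ → x^H/2 + x^(1-H) ≤ ε := by
  refine ⟨min (1/2) (min (ε ^ (1/H)) ((ε/2) ^ (1/(1-H)))), ?_, min_le_left _ _, ?_⟩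
  · have h1 : (0:ℝ) < ε ^ (1/H) := Real.rpow_pos_of_pos hε _
    have h2 : (0:ℝ) < (ε/2) ^ (1/(1-H)) := Real.rpow_pos_of_pos (by linarith) _
    positivity
  · intro x hx hxle
    have hle1 : x ≤ ε ^ (1/H) := hxle.trans ((min_le_right _ _).trans (min_le_left _ _))
    have hle2 : x ≤ (ε/2) ^ (1/(1-H)) := hxle.trans ((min_le_right _ _).trans (min_le_right _ _))
    have b1 : x ^ H ≤ ε := by
      have := Real.rpow_le_rpow hx.le hle1 hH0.le
      rwa [← Real.rpow_mul hε.le, one_div_mul_cancel (ne_of_gt hH0), Real.rpow_one] at this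
    have b2 : x ^ (1-H) ≤ ε/2 := by
      have h1H : (0:ℝ) < 1 - H := by linarith
      have := Real.rpow_le_rpow hx.le hle2 h1H.le
      rwa [← Real.rpow_mul (by linarith : (0:ℝ) ≤ ε/2), one_div_mul_cancel (ne_of_gt h1H),
        Real.rpow_one] at this
    linarith

variable {Ω : Type*} [MeasurableSpace Ω] {P : Measure Ω} [IsProbabilityMeasure P]
variable {B : ℝ → Ω → ℝ}

lemma aemeasurable_of_map_gaussian {L : Ω → ℝ} {v : ℝ≥0}
    (h : Measure.map L P = gaussianReal 0 v) : AEMeasurable L P := by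
  by_contra hL
  rw [Measure.map_of_not_aemeasurable hL] at h
  have h1 : (0 : Measure ℝ) Set.univ = 1 := by rw [h]; exact measure_univ
  simp at h1

lemma integrable_exp_of_map_gaussian {L : Ω → ℝ} {v : ℝ≥0}
    (h : Measure.map L P = gaussianReal 0 v) :
    Integrable (fun ω => Real.exp (L ω)) P := by
  have hL := aemeasurable_of_map_gaussian h
  have := (integrable_map_measure (g := Real.exp)
    (by rw [h]; exact (integrable_exp_gaussianReal v).aestronglyMeasurable) hL).mp
    (by rw [h]; exact integrable_exp_gaussianReal v)
  exact this

lemma integral_exp_of_map_gaussian {L : Ω → ℝ} {v : ℝ≥0}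
    (h : Measure.map L P = gaussianReal 0 v) :
    ∫ ω, Real.exp (L ω) ∂P = Real.exp ((v:ℝ) / 2) := by
  have hL := aemeasurable_of_map_gaussian h
  rw [← integral_exp_gaussianReal v, ← h,
    integral_map hL (by rw [h]; exact (integrable_exp_gaussianReal v).aestronglyMeasurable)]

lemma law_single (hB : IsFractionalBrownianMotion P H B) (hH : H ≠ 0)
    (c t : ℝ) (ht : 0 ≤ t) :
    Measure.map (fun ω => c * B t ω) P = gaussianReal 0 (c^2 * t^(2*H)).toNNReal := by
  have h := hB.gaussian 1 (fun _ => t) (fun _ => c) (fun _ => ht)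
  have h1 : (fun ω => ∑ _i : Fin 1, c * B t ω) = fun ω => c * B t ω := by
    ext ω; rw [Fin.sum_univ_one]
  have h2 : (∑ _i : Fin 1, ∑ _j : Fin 1, c * c * fbmCov H t t) = c^2 * t^(2*H) := by
    rw [Fin.sum_univ_one, Fin.sum_univ_one, fbmCov_self hH]; ring
  rwa [h1, h2] at h

lemma law_pair (hB : IsFractionalBrownianMotion P H B) (hH : H ≠ 0)
    (c d s t : ℝ) (hs : 0 ≤ s) (ht : 0 ≤ t) :
    Measure.map (fun ω => c * B s ω + d * B t ω) P =
      gaussianReal 0 (c^2 * s^(2*H) + 2*c*d*fbmCov H s t + d^2 * t^(2*H)).toNNReal := by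
  have hpos : ∀ i : Fin 2, 0 ≤ (![s, t]) i := by
    intro i; fin_cases i <;> simpa
  have h := hB.gaussian 2 ![s, t] ![c, d] hpos
  have h1 : (fun ω => ∑ i : Fin 2, (![c,d]) i * B ((![s,t]) i) ω)
      = fun ω => c * B s ω + d * B t ω := by
    ext ω; rw [Fin.sum_univ_two]; simp
  have h2 : (∑ i : Fin 2, ∑ j : Fin 2, (![c,d]) i * (![c,d]) j * fbmCov H ((![s,t]) i) ((![s,t]) j))
      = c^2 * s^(2*H) + 2*c*d*fbmCov H s t + d^2 * t^(2*H) := by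
    simp only [Fin.sum_univ_two]
    simp only [Matrix.cons_val_zero, Matrix.cons_val_one, Matrix.head_cons]
    rw [fbmCov_self hH, fbmCov_self hH, fbmCov_symm (s := t) (t := s)]
    ring
  rwa [h1, h2] at h

lemma exp_sub_one_le {x : ℝ} (hx : 0 ≤ x) : Real.exp x - 1 ≤ x * Real.exp x := by
  have h1 : -x + 1 ≤ Real.exp (-x) := Real.add_one_le_exp (-x)
  have h2 : Real.exp (-x) * Real.exp x = 1 := by
    rw [← Real.exp_add]; simp
  nlinarith [Real.exp_pos x, mul_le_mul_of_nonneg_right h1 (Real.exp_pos x).le]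

set_option maxHeartbeats 1000000 in
lemma core_estimate (hB : IsFractionalBrownianMotion P H B) (hH : H ∈ Set.Ioo (0:ℝ) 1)
    (M T : ℝ) (hM : 1 ≤ M) (hT : 0 ≤ T) (n : ℕ) (hn : 1 ≤ n) :
    (P {ω | ∀ t, T ≤ t → B t ω ≤ M}).toReal * n ≤ 5 * Real.exp 8 := by
  obtain ⟨hH0, hH1⟩ := hH
  have hHne : H ≠ 0 := ne_of_gt hH0
  have hnpos : (0:ℝ) < n := by exact_mod_cast hn
  obtain ⟨x₀, hx₀pos, hx₀half, hx₀⟩ := exists_ratio_bound hH0 hH1 (ε := 1/(n:ℝ)) (by positivity)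
  set T₀ : ℝ := max (max T 1) ((2*M) ^ (1/H)) with hT₀def
  have hT₀1 : (1:ℝ) ≤ T₀ := le_trans (le_max_right T 1) (le_max_left _ _)
  have hT₀T : T ≤ T₀ := le_trans (le_max_left T 1) (le_max_left _ _)
  have hT₀M : (2*M) ^ (1/H) ≤ T₀ := le_max_right _ _
  have hT₀pos : (0:ℝ) < T₀ := lt_of_lt_of_le one_pos hT₀1
  set y : ℝ := x₀⁻¹ with hydef
  have hyinv : 0 < y := inv_pos.mpr hx₀pos
  have hy2 : (2:ℝ) ≤ y := by
    rw [hydef]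
    nlinarith [mul_inv_cancel₀ (ne_of_gt hx₀pos), inv_pos.mpr hx₀pos]
  have hy1 : (1:ℝ) ≤ y := by linarith
  set tk : Fin n → ℝ := fun k => T₀ * y ^ (k.val + 1) with htkdef
  have hpow1 : ∀ m : ℕ, (1:ℝ) ≤ y ^ m := fun m => one_le_pow₀ hy1
  have htk_pos : ∀ k, 0 < tk k := fun k => mul_pos hT₀pos (pow_pos hyinv _)
  have htk_T₀ : ∀ k, T₀ ≤ tk k := fun k => le_mul_of_one_le_right hT₀pos.le (hpow1 _)
  have htk_T : ∀ k, T ≤ tk k := fun k => hT₀T.trans (htk_T₀ k)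
  set σ : Fin n → ℝ := fun k => (tk k) ^ H with hσdef
  have hσpos : ∀ k, 0 < σ k := fun k => Real.rpow_pos_of_pos (htk_pos k) H
  have hσM : ∀ k, 2*M ≤ σ k := by
    intro k
    have h2M : (0:ℝ) < 2*M := by linarith
    have h1 : ((2*M) ^ (1/H)) ^ H = 2*M := by
      rw [← Real.rpow_mul h2M.le, one_div_mul_cancel hHne, Real.rpow_one]
    calc 2*M = ((2*M) ^ (1/H)) ^ H := h1.symm
      _ ≤ (tk k) ^ H := Real.rpow_le_rpow (Real.rpow_nonneg h2M.le _)
          (hT₀M.trans (htk_T₀ k)) hH0.le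
  set c : Fin n → ℝ := fun k => 2 / σ k with hcdef
  have hcpos : ∀ k, 0 < c k := fun k => div_pos two_pos (hσpos k)
  have hrpowsq : ∀ k, (tk k) ^ (2*H) = σ k * σ k := by
    intro k
    rw [hσdef, ← Real.rpow_add (htk_pos k)]; ring_nf
  -- ratio bound for ordered pairs
  have hratio : ∀ j k : Fin n, j.val < k.val →
      tk j ≤ tk k ∧ fbmCov H (tk j) (tk k) ≤ (1/(n:ℝ)) * (σ j * σ k) := by
    intro j k hjk
    have hle : tk j ≤ tk k := by
      rw [htkdef]
      apply mul_le_mul_of_nonneg_left _ hT₀pos.le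
      exact pow_le_pow_right₀ hy1 (by omega)
    refine ⟨hle, ?_⟩
    have hx : tk j / tk k = x₀ ^ (k.val - j.val) := by
      have hk : tk k = tk j * y ^ (k.val - j.val) := by
        rw [htkdef]
        simp only []
        rw [mul_assoc, ← pow_add]
        congr 2
        omega
      rw [hk, div_mul_eq_div_div, div_self (ne_of_gt (htk_pos j)), one_div, hydef,
        ← inv_pow, inv_inv]
    have hxle : tk j / tk k ≤ x₀ := by
      rw [hx]
      calc x₀ ^ (k.val - j.val) ≤ x₀ ^ 1 :=
        pow_le_pow_of_le_one hx₀pos.le (by linarith) (by omega)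
        _ = x₀ := pow_one _
    have hxpos : 0 < tk j / tk k := div_pos (htk_pos j) (htk_pos k)
    have h1 := fbmCov_le hH0 hH1 (htk_pos j) hle
    have h2 := hx₀ _ hxpos hxle
    have h3 : (0:ℝ) ≤ σ j * σ k := (mul_pos (hσpos j) (hσpos k)).le
    calc fbmCov H (tk j) (tk k)
        ≤ ((tk j/tk k)^H/2 + (tk j/tk k)^(1-H)) * (σ j * σ k) := h1
      _ ≤ (1/(n:ℝ)) * (σ j * σ k) := mul_le_mul_of_nonneg_right h2 h3
  -- the random variables
  set Z : Fin n → Ω → ℝ := fun k ω => Real.exp (c k * B (tk k) ω) with hZdef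
  set m : ℝ := Real.exp 2 with hmdef
  set Zf : Fin n → Ω → ℝ := fun k ω => Z k ω - m with hZfdef
  -- single laws
  have hvar1 : ∀ k, (c k)^2 * (tk k)^(2*H) = 4 := by
    intro k
    rw [hrpowsq k, hcdef]
    field_simp
    rw [mul_div_assoc, div_self (hσpos k).ne']; norm_num
  have hvar2 : ∀ k, (2 * c k)^2 * (tk k)^(2*H) = 16 := by
    intro k
    rw [hrpowsq k, hcdef]
    field_simp
    rw [mul_div_assoc, div_self (hσpos k).ne']; norm_num
  have hlaw1 : ∀ k, Measure.map (fun ω => c k * B (tk k) ω) P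
      = gaussianReal 0 ((4:ℝ)).toNNReal := by
    intro k
    have := law_single hB hHne (c k) (tk k) (htk_pos k).le
    rwa [hvar1 k] at this
  have hlaw2 : ∀ k, Measure.map (fun ω => (2 * c k) * B (tk k) ω) P
      = gaussianReal 0 ((16:ℝ)).toNNReal := by
    intro k
    have := law_single hB hHne (2 * c k) (tk k) (htk_pos k).le
    rwa [hvar2 k] at this
  have hintZ : ∀ k, Integrable (Z k) P := fun k => integrable_exp_of_map_gaussian (hlaw1 k)
  have hEZ : ∀ k, ∫ ω, Z k ω ∂P = Real.exp 2 := by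
    intro k
    have := integral_exp_of_map_gaussian (hlaw1 k)
    rwa [Real.coe_toNNReal _ (by norm_num : (0:ℝ) ≤ 4), (by norm_num : (4:ℝ)/2 = 2)] at this
  have hintZ2 : ∀ k, Integrable (fun ω => Real.exp ((2 * c k) * B (tk k) ω)) P :=
    fun k => integrable_exp_of_map_gaussian (hlaw2 k)
  have hEZ2 : ∀ k, ∫ ω, Real.exp ((2 * c k) * B (tk k) ω) ∂P = Real.exp 8 := by
    intro k
    have := integral_exp_of_map_gaussian (hlaw2 k)
    rwa [Real.coe_toNNReal _ (by norm_num : (0:ℝ) ≤ 16), (by norm_num : (16:ℝ)/2 = 8)] at this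
  -- the key bound on each product term
  have key : ∀ j k : Fin n, Integrable (fun ω => Zf j ω * Zf k ω) P ∧
      ∫ ω, Zf j ω * Zf k ω ∂P ≤ (if j = k then Real.exp 8 else 0) + 4 * Real.exp 8 / n := by
    have main : ∀ j k : Fin n, j.val < k.val → Integrable (fun ω => Zf j ω * Zf k ω) P ∧
        ∫ ω, Zf j ω * Zf k ω ∂P ≤ 4 * Real.exp 8 / n := by
      intro j k hjk
      obtain ⟨hle, hcov⟩ := hratio j k hjk
      have hcov0 : 0 ≤ fbmCov H (tk j) (tk k) := fbmCov_nonneg hH0 (htk_pos j).le hle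
      set δ : ℝ := 2 * c j * c k * fbmCov H (tk j) (tk k) with hδdef
      have hδ0 : 0 ≤ δ := by
        apply mul_nonneg _ hcov0
        have := (hcpos j).le; have := (hcpos k).le
        positivity
      have hσσ : (0:ℝ) < σ j * σ k := mul_pos (hσpos j) (hσpos k)
      have hδle : δ ≤ 8 / n := by
        have h8 : δ = 8 * fbmCov H (tk j) (tk k) / (σ j * σ k) := by
          rw [hδdef, hcdef]
          ring
        rw [h8, div_le_div_iff₀ hσσ hnpos]
        have h9 := mul_le_mul_of_nonneg_left hcov (by positivity : (0:ℝ) ≤ 8*(n:ℝ))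
        have hcalc : 8*(n:ℝ)*((1/(n:ℝ))*(σ j*σ k)) = 8*(σ j*σ k) := by
          field_simp
        nlinarith [h9, hcalc]
      have hlawp := law_pair hB hHne (c j) (c k) (tk j) (tk k) (htk_pos j).le (htk_pos k).le
      have hv : (c j)^2*(tk j)^(2*H) + 2*(c j)*(c k)*fbmCov H (tk j) (tk k)
          + (c k)^2*(tk k)^(2*H) = 8 + δ := by
        rw [hvar1 j, hvar1 k, hδdef]; ring
      rw [hv] at hlawp
      have hintP : Integrable (fun ω => Real.exp (c j * B (tk j) ω + c k * B (tk k) ω)) P :=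
        integrable_exp_of_map_gaussian hlawp
      have hEP : ∫ ω, Real.exp (c j * B (tk j) ω + c k * B (tk k) ω) ∂P
          = Real.exp ((8 + δ)/2) := by
        have := integral_exp_of_map_gaussian hlawp
        rwa [Real.coe_toNNReal _ (by linarith : (0:ℝ) ≤ 8 + δ)] at this
      have hfeq : (fun ω => Zf j ω * Zf k ω)
          = fun ω => Real.exp (c j * B (tk j) ω + c k * B (tk k) ω)
            - m * Z j ω - m * Z k ω + m * m := by
        ext ω
        simp only [hZfdef, hZdef, Real.exp_add]
        ring
      have hI1 : Integrable (fun ω => Real.exp (c j * B (tk j) ω + c k * B (tk k) ω)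
          - m * Z j ω) P := hintP.sub ((hintZ j).const_mul m)
      have hI2 : Integrable (fun ω => Real.exp (c j * B (tk j) ω + c k * B (tk k) ω)
          - m * Z j ω - m * Z k ω) P := hI1.sub ((hintZ k).const_mul m)
      have hint : Integrable (fun ω => Zf j ω * Zf k ω) P := by
        rw [hfeq]
        exact hI2.add (integrable_const (m*m))
      refine ⟨hint, ?_⟩
      have hval : ∫ ω, Zf j ω * Zf k ω ∂P = Real.exp ((8 + δ)/2) - Real.exp 4 := by
        rw [hfeq, integral_add hI2 (integrable_const (m*m)),
          integral_sub hI1 ((hintZ k).const_mul m),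
          integral_sub hintP ((hintZ j).const_mul m),
          integral_const_mul, integral_const_mul, hEZ j, hEZ k, hEP, integral_const]
        simp only [measure_univ, ENNReal.toReal_one, probReal_univ, one_smul, hmdef]
        rw [show Real.exp 2 * Real.exp 2 = Real.exp 4 by rw [← Real.exp_add]; norm_num]
        ring
      rw [hval]
      -- exp((8+δ)/2) - exp 4 ≤ 4 exp 8 / n
      have e1 : Real.exp ((8 + δ)/2) = Real.exp 4 * Real.exp (δ/2) := by
        rw [← Real.exp_add]; ring_nf
      have e2 : Real.exp (δ/2) - 1 ≤ (δ/2) * Real.exp (δ/2) := exp_sub_one_le (by linarith)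
      have e3 : Real.exp (δ/2) ≤ Real.exp 4 := by
        apply Real.exp_le_exp.mpr
        have : (8:ℝ)/n ≤ 8 := by
          apply div_le_self (by norm_num) (by exact_mod_cast hn)
        linarith
      have e4 : Real.exp 4 * Real.exp 4 = Real.exp 8 := by rw [← Real.exp_add]; norm_num
      have hδle2 : δ/2 ≤ 4/(n:ℝ) := by
        have h48 : (4:ℝ)/n = (8/n)/2 := by ring
        rw [h48]
        linarith
      have e5 : (δ/2) * Real.exp (δ/2) ≤ (4/n) * Real.exp 4 := by
        apply mul_le_mul hδle2 e3 (Real.exp_pos _).le (by positivity)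
      have h6 : Real.exp 4 * (Real.exp (δ/2) - 1) ≤ Real.exp 4 * ((4/n) * Real.exp 4) :=
        mul_le_mul_of_nonneg_left (e2.trans e5) (Real.exp_pos _).le
      calc Real.exp ((8 + δ)/2) - Real.exp 4
          = Real.exp 4 * (Real.exp (δ/2) - 1) := by rw [e1]; ring
        _ ≤ Real.exp 4 * ((4/n) * Real.exp 4) := h6
        _ = 4 * Real.exp 8 / n := by rw [← e4]; ring
    -- diagonal case
    have diag : ∀ k : Fin n, Integrable (fun ω => Zf k ω * Zf k ω) P ∧
        ∫ ω, Zf k ω * Zf k ω ∂P ≤ Real.exp 8 := by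
      intro k
      have hfeq : (fun ω => Zf k ω * Zf k ω)
          = fun ω => Real.exp ((2 * c k) * B (tk k) ω) - (2*m) * Z k ω + m * m := by
        ext ω
        simp only [hZfdef, hZdef]
        rw [show (2 * c k) * B (tk k) ω = c k * B (tk k) ω + c k * B (tk k) ω by ring,
          Real.exp_add]
        ring
      have hI1 : Integrable (fun ω => Real.exp ((2 * c k) * B (tk k) ω) - (2*m) * Z k ω) P :=
        (hintZ2 k).sub ((hintZ k).const_mul (2*m))
      have hint : Integrable (fun ω => Zf k ω * Zf k ω) P := by
        rw [hfeq]
        exact hI1.add (integrable_const (m*m))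
      refine ⟨hint, ?_⟩
      have hval : ∫ ω, Zf k ω * Zf k ω ∂P = Real.exp 8 - Real.exp 4 := by
        rw [hfeq, integral_add hI1 (integrable_const (m*m)),
          integral_sub (hintZ2 k) ((hintZ k).const_mul (2*m)),
          integral_const_mul, hEZ k, hEZ2 k, integral_const]
        simp only [measure_univ, ENNReal.toReal_one, probReal_univ, one_smul, hmdef]
        have hee2 : Real.exp 2 ^ 2 = Real.exp 4 := by
          rw [sq, ← Real.exp_add]; norm_num
        have hee : Real.exp 2 * Real.exp 2 = Real.exp 4 := by rw [← Real.exp_add]; norm_num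
        nlinarith [hee2, hee]
      rw [hval]
      have := Real.exp_pos 4
      linarith
    intro j k
    have hpos48 : (0:ℝ) ≤ 4 * Real.exp 8 / n := by positivity
    rcases lt_trichotomy j.val k.val with h | h | h
    · obtain ⟨h1, h2⟩ := main j k h
      refine ⟨h1, h2.trans ?_⟩
      have : j ≠ k := by intro he; rw [he] at h; omega
      simp [this]
    · have hjk : j = k := Fin.ext h
      subst hjk
      obtain ⟨h1, h2⟩ := diag j
      refine ⟨h1, ?_⟩
      rw [if_pos rfl]
      linarith
    · obtain ⟨h1, h2⟩ := main k j h
      have hswap : (fun ω => Zf j ω * Zf k ω) = (fun ω => Zf k ω * Zf j ω) := by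
        ext ω; ring
      have : j ≠ k := by intro he; rw [he] at h; omega
      rw [hswap]
      refine ⟨h1, h2.trans ?_⟩
      simp [this]
  -- sum it all up
  have hintW2 : Integrable (fun ω => (∑ k, Zf k ω)^2) P := by
    have hfeq : (fun ω => (∑ k, Zf k ω)^2) = fun ω => ∑ j, ∑ k, Zf j ω * Zf k ω := by
      ext ω
      rw [sq, Finset.sum_mul_sum]
    rw [hfeq]
    exact integrable_finset_sum _ (fun j _ => integrable_finset_sum _ (fun k _ => (key j k).1))
  have hEW2 : ∫ ω, (∑ k, Zf k ω)^2 ∂P ≤ 5 * Real.exp 8 * n := by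
    have hfeq : (fun ω => (∑ k, Zf k ω)^2) = fun ω => ∑ j, ∑ k, Zf j ω * Zf k ω := by
      ext ω
      rw [sq, Finset.sum_mul_sum]
    rw [hfeq, integral_finset_sum _ (fun j _ => integrable_finset_sum _
      (fun k _ => (key j k).1))]
    have hinner : ∀ j : Fin n, ∫ ω, (∑ k, Zf j ω * Zf k ω) ∂P ≤ 5 * Real.exp 8 := by
      intro j
      rw [integral_finset_sum _ (fun k _ => (key j k).1)]
      calc ∑ k, ∫ ω, Zf j ω * Zf k ω ∂P
          ≤ ∑ k : Fin n, ((if j = k then Real.exp 8 else 0) + 4 * Real.exp 8 / n) :=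
            Finset.sum_le_sum (fun k _ => (key j k).2)
        _ = (∑ k : Fin n, (if j = k then Real.exp 8 else 0))
            + ∑ _k : Fin n, 4 * Real.exp 8 / n := Finset.sum_add_distrib
        _ = Real.exp 8 + (n : ℝ) * (4 * Real.exp 8 / n) := by
            rw [Finset.sum_ite_eq, Finset.sum_const]
            simp [Finset.card_univ]
        _ ≤ 5 * Real.exp 8 := by
            rw [mul_div_assoc', mul_comm ((n:ℝ)), mul_div_assoc, div_self (ne_of_gt hnpos)]
            have := Real.exp_pos 8
            linarith
    calc ∑ j, ∫ ω, (∑ k, Zf j ω * Zf k ω) ∂P ≤ ∑ _j : Fin n, 5 * Real.exp 8 :=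
          Finset.sum_le_sum (fun j _ => hinner j)
      _ = (n:ℝ) * (5 * Real.exp 8) := by rw [Finset.sum_const]; simp [Finset.card_univ]
      _ = 5 * Real.exp 8 * n := by ring
  -- event inclusion
  set q : ℝ := (n:ℝ) * (Real.exp 2 - Real.exp 1) with hqdef
  have hexp12 : Real.exp 1 < Real.exp 2 := Real.exp_lt_exp.mpr (by norm_num)
  have hq0 : 0 ≤ q := by
    rw [hqdef]
    have : (0:ℝ) ≤ Real.exp 2 - Real.exp 1 := by linarith
    positivity
  have hsub : {ω | ∀ t, T ≤ t → B t ω ≤ M} ⊆ {ω | q^2 ≤ (∑ k, Zf k ω)^2} := by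
    intro ω hω
    simp only [Set.mem_setOf_eq] at hω ⊢
    have hZk : ∀ k, Zf k ω ≤ Real.exp 1 - Real.exp 2 := by
      intro k
      simp only [hZfdef, hZdef, hmdef]
      have h1 : B (tk k) ω ≤ M := hω _ (htk_T k)
      have h2 : c k * B (tk k) ω ≤ 1 := by
        have h3 : c k * B (tk k) ω ≤ c k * M := mul_le_mul_of_nonneg_left h1 (hcpos k).le
        have h4 : c k * M ≤ 1 := by
          rw [hcdef]
          rw [div_mul_eq_mul_div, div_le_one (hσpos k)]
          exact hσM k
        linarith
      have := Real.exp_le_exp.mpr h2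
      linarith
    have hsum : (∑ k, Zf k ω) ≤ -q := by
      calc (∑ k, Zf k ω) ≤ ∑ _k : Fin n, (Real.exp 1 - Real.exp 2) :=
            Finset.sum_le_sum (fun k _ => hZk k)
        _ = (n:ℝ) * (Real.exp 1 - Real.exp 2) := by rw [Finset.sum_const]; simp [Finset.card_univ]
        _ = -q := by rw [hqdef]; ring
    nlinarith [hsum, hq0]
  -- Markov
  have hmark := mul_meas_ge_le_integral_of_nonneg (μ := P)
    (f := fun ω => (∑ k, Zf k ω)^2) (ae_of_all _ (fun ω => sq_nonneg _)) hintW2 (q^2)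
  have hmono : (P {ω | ∀ t, T ≤ t → B t ω ≤ M}).toReal
      ≤ (P {ω | q^2 ≤ (∑ k, Zf k ω)^2}).toReal :=
    ENNReal.toReal_mono (measure_ne_top P _) (measure_mono hsub)
  set p : ℝ := (P {ω | ∀ t, T ≤ t → B t ω ≤ M}).toReal with hpdef
  have hp0 : 0 ≤ p := ENNReal.toReal_nonneg
  have hq2 : p * q^2 ≤ 5 * Real.exp 8 * n := by
    have h1 : q^2 * p ≤ q^2 * (P {ω | q^2 ≤ (∑ k, Zf k ω)^2}).toReal :=
      mul_le_mul_of_nonneg_left hmono (sq_nonneg q)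
    have h2 := h1.trans (hmark.trans hEW2)
    linarith
  -- q^2 ≥ n^2 since exp 2 - exp 1 ≥ 1
  have hgap : (1:ℝ) ≤ Real.exp 2 - Real.exp 1 := by
    have h1 : (1:ℝ) + 1 ≤ Real.exp 1 := Real.add_one_le_exp 1
    have h2 : Real.exp 2 = Real.exp 1 * Real.exp 1 := by rw [← Real.exp_add]; norm_num
    nlinarith [Real.exp_pos 1]
  have hqn : (n:ℝ)^2 ≤ q^2 := by
    rw [hqdef, mul_pow]
    have hgap2 : (1:ℝ) ≤ (Real.exp 2 - Real.exp 1)^2 := by nlinarith [hgap]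
    nlinarith [hgap2, sq_nonneg ((n:ℝ))]
  have hfin : p * (n:ℝ) * (n:ℝ) ≤ 5 * Real.exp 8 * n := by
    have : p * (n:ℝ)^2 ≤ p * q^2 := mul_le_mul_of_nonneg_left hqn hp0
    nlinarith
  exact le_of_mul_le_mul_right (by linarith) hnpos


lemma null_bounded (hB : IsFractionalBrownianMotion P H B) (hH : H ∈ Set.Ioo (0:ℝ) 1)
    (M T : ℝ) (hM : 1 ≤ M) (hT : 0 ≤ T) :
    P {ω | ∀ t, T ≤ t → B t ω ≤ M} = 0 := by
  set E := {ω | ∀ t, T ≤ t → B t ω ≤ M} with hEdef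
  have h0 : (P E).toReal = 0 := by
    by_contra hne
    have hp : 0 < (P E).toReal := lt_of_le_of_ne ENNReal.toReal_nonneg (Ne.symm hne)
    obtain ⟨n, hn⟩ := exists_nat_gt ((5 * Real.exp 8) / (P E).toReal)
    have hnpos : (0:ℝ) < n := lt_trans (by positivity) hn
    have hn1 : 1 ≤ n := by exact_mod_cast hnpos
    have h1 := core_estimate hB hH M T hM hT n hn1
    rw [div_lt_iff₀ hp] at hn
    nlinarith
  have := (ENNReal.toReal_eq_zero_iff _).mp h0
  exact this.resolve_right (measure_ne_top P _)

lemma ae_unbounded (hB : IsFractionalBrownianMotion P H B) (hH : H ∈ Set.Ioo (0:ℝ) 1) :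
    ∀ᵐ ω ∂P, ∀ M : ℕ, ∀ T : ℕ, ∃ t : ℝ, (T:ℝ) ≤ t ∧ (M:ℝ) < B t ω := by
  have h1 : ∀ M T : ℕ, P {ω | ∀ t, (T:ℝ) ≤ t → B t ω ≤ max (M:ℝ) 1} = 0 := fun M T =>
    null_bounded hB hH _ _ (le_max_right _ _) (Nat.cast_nonneg T)
  rw [ae_iff]
  apply measure_mono_null _
    (measure_iUnion_null (fun M : ℕ => measure_iUnion_null (fun T : ℕ => h1 M T)))
  intro ω hω
  simp only [mem_setOf_eq, not_forall, not_exists, not_and, not_lt] at hω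
  obtain ⟨M, T, hMT⟩ := hω
  refine mem_iUnion.mpr ⟨M, mem_iUnion.mpr ⟨T, ?_⟩⟩
  intro t ht
  exact le_trans (hMT t ht) (le_max_left _ _)

lemma J_ge_max {ω : Ω} {a : ℝ} (ha : a < 0) {τ : ℝ} (hτ : 0 ≤ τ)
    (hcont : ContinuousOn (fun t => B t ω) (Set.Ici 0))
    (hmax : ∀ x ∈ Set.Icc 0 τ, B x ω ≤ B τ ω) :
    B τ ω ≤ fbmJ a B τ ω := by
  have hane : a ≠ 0 := ne_of_lt ha
  have hsub : Set.Icc (0:ℝ) τ ⊆ Set.Ici 0 := fun x hx => hx.1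
  have hcexp : Continuous (fun s : ℝ => Real.exp (-(a*s))) := by continuity
  have hint1 : IntervalIntegrable (fun s => Real.exp (-(a*s)) * B s ω) volume 0 τ := by
    apply ContinuousOn.intervalIntegrable
    rw [uIcc_of_le hτ]
    exact (hcexp.continuousOn).mul (hcont.mono hsub)
  have hint2 : IntervalIntegrable (fun s => Real.exp (-(a*s)) * B τ ω) volume 0 τ :=
    (hcexp.mul continuous_const).intervalIntegrable _ _
  have hmono : (∫ s in (0:ℝ)..τ, Real.exp (-(a*s)) * B s ω)
      ≤ ∫ s in (0:ℝ)..τ, Real.exp (-(a*s)) * B τ ω :=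
    intervalIntegral.integral_mono_on hτ hint1 hint2
      (fun x hx => mul_le_mul_of_nonneg_left (hmax x hx) (Real.exp_pos _).le)
  have hI : (∫ s in (0:ℝ)..τ, Real.exp (-(a*s))) = (1 - Real.exp (-(a*τ))) / a := by
    have hD : ∀ x ∈ Set.uIcc (0:ℝ) τ,
        HasDerivAt (fun s => -(Real.exp (-(a*s)) / a)) (Real.exp (-(a*x))) x := by
      intro x _
      have h1 : HasDerivAt (fun s : ℝ => -(a*s)) (-a) x := by
        have h := ((hasDerivAt_id x).const_mul a).neg
        simp only [mul_one] at h
        exact h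
      have h3 := ((h1.exp).div_const a).neg
      rw [mul_neg, neg_div, neg_neg, mul_div_assoc, div_self hane, mul_one] at h3
      exact h3
    have hcont2 : IntervalIntegrable (fun s : ℝ => Real.exp (-(a*s))) volume 0 τ :=
      hcexp.intervalIntegrable _ _
    rw [intervalIntegral.integral_eq_sub_of_hasDerivAt hD hcont2]
    rw [mul_zero, neg_zero, Real.exp_zero]
    ring
  have hI2 : (∫ s in (0:ℝ)..τ, Real.exp (-(a*s)) * B τ ω)
      = B τ ω * ((1 - Real.exp (-(a*τ))) / a) := by
    rw [intervalIntegral.integral_mul_const, hI]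
    ring
  have hstep := mul_le_mul_of_nonpos_left hmono (le_of_lt ha)
  rw [hI2] at hstep
  have hcalc : a * (B τ ω * ((1 - Real.exp (-(a*τ))) / a))
      = B τ ω * (1 - Real.exp (-(a*τ))) := by
    field_simp
  rw [hcalc] at hstep
  rw [fbmJ]
  nlinarith [hstep]

lemma pathwise {ω : Ω} {a : ℝ} (ha : a < 0)
    (hcont : ContinuousOn (fun t => B t ω) (Set.Ici 0))
    (hub : ∀ M T : ℕ, ∃ t : ℝ, (T:ℝ) ≤ t ∧ (M:ℝ) < B t ω) :
    Filter.limsup (fun t => ((fbmJ a B t ω : ℝ) : EReal)) Filter.atTop = ⊤ := by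
  rw [EReal.eq_top_iff_forall_lt]
  intro r
  have hfreq : ∃ᶠ t in Filter.atTop, ((r+1 : ℝ) : EReal) ≤ ((fbmJ a B t ω : ℝ) : EReal) := by
    rw [frequently_atTop]
    intro T
    set T₁ : ℝ := max T 0 with hT₁def
    have hT₁0 : 0 ≤ T₁ := le_max_right _ _
    obtain ⟨z, hzmem, hzmax⟩ := isCompact_Icc.exists_isMaxOn (Set.nonempty_Icc.mpr hT₁0)
      (hcont.mono (fun x hx => hx.1))
    obtain ⟨M, hM⟩ := exists_nat_gt (max (r+1) (B z ω))
    obtain ⟨T₂, hT₂⟩ := exists_nat_ge T₁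
    obtain ⟨u, huT₂, huM⟩ := hub M T₂
    have hu0 : 0 ≤ u := le_trans (le_trans hT₁0 hT₂) huT₂
    obtain ⟨τ, hτmem, hτmax⟩ := isCompact_Icc.exists_isMaxOn (Set.nonempty_Icc.mpr hu0)
      (hcont.mono (fun x (hx : x ∈ Set.Icc 0 u) => hx.1))
    have hτu : B u ω ≤ B τ ω := hτmax (Set.mem_Icc.mpr ⟨hu0, le_refl u⟩)
    have hτM : (M:ℝ) < B τ ω := lt_of_lt_of_le huM hτu
    have hτT₁ : T₁ < τ := by
      by_contra hle
      push_neg at hle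
      have h1 : B τ ω ≤ B z ω := hzmax (Set.mem_Icc.mpr ⟨hτmem.1, hle⟩)
      have h2 : B z ω ≤ max (r+1) (B z ω) := le_max_right _ _
      linarith
    have hJ : B τ ω ≤ fbmJ a B τ ω :=
      J_ge_max ha hτmem.1 hcont (fun x hx => hτmax (Set.mem_Icc.mpr ⟨hx.1, hx.2.trans hτmem.2⟩))
    refine ⟨τ, le_trans (le_max_left T 0) hτT₁.le, ?_⟩
    have hr1 : r + 1 ≤ fbmJ a B τ ω := by
      have := le_max_left (r+1) (B z ω)
      linarith
    exact_mod_cast EReal.coe_le_coe_iff.mpr hr1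
  have hle := le_limsup_of_frequently_le' hfreq
  calc (r : EReal) < ((r+1 : ℝ) : EReal) := by exact_mod_cast lt_add_one r
    _ ≤ _ := hle

end Aux

/-- If `B^H` is a fractional Brownian motion with Hurst parameter `H ∈ (0,1)` and `a < 0`,
and `J_t = e^{−at} B^H_t + a ∫₀ᵗ e^{−as} B^H_s ds`, then almost surely
`limsup_{t→∞} J_t = +∞`. -/
theorem limsup_fbmJ_eq_top_of_neg_drift
    {Ω : Type*} [MeasurableSpace Ω] (P : Measure Ω) [IsProbabilityMeasure P]
    (H : ℝ) (hH : H ∈ Set.Ioo (0:ℝ) 1)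
    (B : ℝ → Ω → ℝ) (hB : IsFractionalBrownianMotion P H B)
    (a : ℝ) (ha : a < 0) :
    P {ω | Filter.limsup (fun t => ((fbmJ a B t ω : ℝ) : EReal)) Filter.atTop = ⊤} = 1 := by
  set S := {ω | Filter.limsup (fun t => ((fbmJ a B t ω : ℝ) : EReal)) Filter.atTop = ⊤} with hSdef
  have hae : ∀ᵐ ω ∂P, ω ∈ S := by
    filter_upwards [hB.cont, ae_unbounded hB hH] with ω h1 h2
    exact pathwise ha h1 h2
  have h0 : P Sᶜ = 0 := by
    rw [ae_iff] at hae
    convert hae using 2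
    rfl
  have h1 : (1:ENNReal) ≤ P S + P Sᶜ := by
    rw [← measure_univ (μ := P), ← Set.union_compl_self S]
    exact measure_union_le _ _
  rw [h0, add_zero] at h1
  exact le_antisymm prob_le_one h1
end

section
/- Let H ∈ (0,1), let B^H be a fractional Brownian motion with Hurst parameter H on a probability space (Ω, F, P), let a > 0, and set J_t := e^{−at} B^H_t + a ∫₀ᵗ e^{−as} B^H_s ds (a pathwise integral, defined using the almost sure continuity of the sample paths). Then P( sup_{t≥0} J_t < ∞ ) = 1. -/
open MeasureTheory ProbabilityTheory Filter Set
open scoped NNReal ENNReal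

lemma my_deriv_aux {v : ℝ} (hv : 0 < v) (y : ℝ) :
    HasDerivAt (fun y : ℝ => -v * Real.exp (-y^2 / (2*v))) (y * Real.exp (-y^2 / (2*v))) y := by
  have h1 : HasDerivAt (fun y : ℝ => -y^2 / (2*v)) (-(2*y^(2-1)) / (2*v)) y :=
    ((hasDerivAt_pow 2 y).neg).div_const (2*v)
  have h2 := (h1.exp).const_mul (-v)
  refine h2.congr_deriv ?_
  field_simp
  ring

lemma my_tail_integrable {v : ℝ} (hv : 0 < v) {x : ℝ} (hx : 0 < x) :
    IntegrableOn (fun y => y * Real.exp (-y^2 / (2*v))) (Ioi x) := by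
  have hcont : Continuous (fun y : ℝ => -v * Real.exp (-y^2 / (2*v))) := by fun_prop
  refine integrableOn_Ioi_deriv_of_nonneg (l := 0) hcont.continuousWithinAt
    (fun y _ => my_deriv_aux hv y) (fun y hy => ?_) ?_
  · have : (0:ℝ) < y := hx.trans hy
    positivity
  · rw [show (0:ℝ) = -v * 0 by ring]
    refine Tendsto.const_mul _ (Real.tendsto_exp_atBot.comp ?_)
    have h : Tendsto (fun y : ℝ => -(y^2 / (2*v))) atTop atBot :=
      tendsto_neg_atBot_iff.mpr ((tendsto_pow_atTop (by norm_num)).atTop_div_const (by positivity))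
    exact h.congr (by intro y; ring)

lemma my_tail_integral {v : ℝ} (hv : 0 < v) {x : ℝ} (hx : 0 < x) :
    ∫ y in Ioi x, y * Real.exp (-y^2 / (2*v)) = v * Real.exp (-x^2 / (2*v)) := by
  have hcont : Continuous (fun y : ℝ => -v * Real.exp (-y^2 / (2*v))) := by fun_prop
  have htend : Tendsto (fun y : ℝ => -v * Real.exp (-y^2 / (2*v))) atTop (nhds 0) := by
    rw [show (0:ℝ) = -v * 0 by ring]
    refine Tendsto.const_mul _ (Real.tendsto_exp_atBot.comp ?_)
    have h : Tendsto (fun y : ℝ => -(y^2 / (2*v))) atTop atBot :=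
      tendsto_neg_atBot_iff.mpr ((tendsto_pow_atTop (by norm_num)).atTop_div_const (by positivity))
    exact h.congr (by intro y; ring)
  rw [integral_Ioi_of_hasDerivAt_of_tendsto hcont.continuousWithinAt
    (fun y _ => my_deriv_aux hv y) (my_tail_integrable hv hx) htend]
  ring


lemma my_gauss_tail {v : ℝ≥0} (hv : v ≠ 0) {x : ℝ} (hx : 0 < x) :
    gaussianReal 0 v (Ici x) ≤ ENNReal.ofReal (Real.sqrt v / x * Real.exp (-x^2 / (2*(v:ℝ)))) := by
  have hv' : (0:ℝ) < (v:ℝ) := by exact_mod_cast pos_iff_ne_zero.mpr hv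
  rw [gaussianReal_apply_eq_integral 0 hv]
  apply ENNReal.ofReal_le_ofReal
  rw [integral_Ici_eq_integral_Ioi]
  have hle : ∀ y ∈ Ioi x, gaussianPDFReal 0 v y ≤
      (Real.sqrt (2*Real.pi*v))⁻¹ / x * (y * Real.exp (-y^2/(2*(v:ℝ)))) := by
    intro y hy
    have hy' : x < y := hy
    have hsq : (0:ℝ) < Real.sqrt (2*Real.pi*v) := by
      apply Real.sqrt_pos.mpr; positivity
    have h1 : gaussianPDFReal 0 v y
        = (Real.sqrt (2*Real.pi*v))⁻¹ * Real.exp (-y^2/(2*(v:ℝ))) := by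
      simp [gaussianPDFReal]
    rw [h1, show (Real.sqrt (2*Real.pi*v))⁻¹ / x * (y * Real.exp (-y^2/(2*(v:ℝ))))
      = ((Real.sqrt (2*Real.pi*v))⁻¹ * Real.exp (-y^2/(2*(v:ℝ)))) * (y / x) by ring]
    refine le_mul_of_one_le_right (by positivity) ?_
    rw [one_le_div hx]
    exact hy'.le
  have hkey : (v:ℝ) / Real.sqrt (2*Real.pi*v) ≤ Real.sqrt v := by
    have hs1 : Real.sqrt v ≤ Real.sqrt (2*Real.pi*v) :=
      Real.sqrt_le_sqrt (by nlinarith [Real.pi_gt_three])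
    have hs0 : (0:ℝ) < Real.sqrt (2*Real.pi*v) := Real.sqrt_pos.mpr (by positivity)
    rw [div_le_iff₀ hs0]
    nlinarith [Real.sq_sqrt hv'.le, Real.sqrt_nonneg (v:ℝ)]
  calc ∫ y in Ioi x, gaussianPDFReal 0 v y
      ≤ ∫ y in Ioi x, (Real.sqrt (2*Real.pi*v))⁻¹ / x * (y * Real.exp (-y^2/(2*(v:ℝ)))) :=
        setIntegral_mono_on ((integrable_gaussianPDFReal 0 v).integrableOn)
          ((my_tail_integrable hv' hx).const_mul _) measurableSet_Ioi hle
    _ = (Real.sqrt (2*Real.pi*v))⁻¹ / x * ((v:ℝ) * Real.exp (-x^2/(2*(v:ℝ)))) := by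
        rw [integral_const_mul, my_tail_integral hv' hx]
    _ = ((v:ℝ) / Real.sqrt (2*Real.pi*v)) / x * Real.exp (-x^2/(2*(v:ℝ))) := by ring
    _ ≤ Real.sqrt v / x * Real.exp (-x^2/(2*(v:ℝ))) := by gcongr


lemma my_map_tail {Ω : Type*} [MeasurableSpace Ω] {P : Measure Ω} [IsProbabilityMeasure P]
    {X : Ω → ℝ} {v : ℝ≥0} (hv : v ≠ 0) (hX : Measure.map X P = gaussianReal 0 v)
    {c : ℝ} (hc : 0 < c) :
    P {ω | c ≤ |X ω|} ≤
      ENNReal.ofReal (2 * (Real.sqrt v / c * Real.exp (-c^2 / (2*(v:ℝ))))) := by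
  have hmX : AEMeasurable X P :=
    aemeasurable_of_map_neZero (by rw [hX]; infer_instance)
  have hneg : Measure.map (fun ω => -X ω) P = gaussianReal 0 v := by
    have h1 : Measure.map (fun y : ℝ => -y) (Measure.map X P) = Measure.map (fun ω => -X ω) P :=
      AEMeasurable.map_map_of_aemeasurable measurable_neg.aemeasurable hmX
    rw [hX] at h1
    rw [← h1]
    have h2 := gaussianReal_map_const_mul (μ := 0) (v := v) (-1)
    have e1 : ((-1:ℝ) * ·) = (fun y : ℝ => -y) := by funext y; simp
    set q : ℝ≥0 := ⟨(-1:ℝ)^2, sq_nonneg _⟩ with hq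
    have e2 : q * v = v := by
      have : q = 1 := by ext; simp [hq]; rfl
      rw [this, one_mul]
    rw [e1, mul_zero] at h2
    rw [h2]
    exact congrArg (gaussianReal 0) e2
  have hsub : {ω | c ≤ |X ω|} ⊆ X ⁻¹' (Ici c) ∪ (fun ω => -X ω) ⁻¹' (Ici c) := by
    intro ω hω
    have hω' : c ≤ |X ω| := hω
    simp only [mem_union, mem_preimage, mem_Ici]
    rcases abs_cases (X ω) with ⟨h, _⟩ | ⟨h, _⟩
    · left; linarith
    · right; linarith
  have hmneg : AEMeasurable (fun ω => -X ω) P := hmX.neg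
  have h1 : P (X ⁻¹' (Ici c)) ≤ ENNReal.ofReal (Real.sqrt v / c * Real.exp (-c^2 / (2*(v:ℝ)))) := by
    rw [← Measure.map_apply_of_aemeasurable hmX measurableSet_Ici, hX]
    exact my_gauss_tail hv hc
  have h2 : P ((fun ω => -X ω) ⁻¹' (Ici c)) ≤
      ENNReal.ofReal (Real.sqrt v / c * Real.exp (-c^2 / (2*(v:ℝ)))) := by
    rw [← Measure.map_apply_of_aemeasurable hmneg measurableSet_Ici, hneg]
    exact my_gauss_tail hv hc
  calc P {ω | c ≤ |X ω|} ≤ P (X ⁻¹' (Ici c) ∪ (fun ω => -X ω) ⁻¹' (Ici c)) := measure_mono hsub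
    _ ≤ P (X ⁻¹' (Ici c)) + P ((fun ω => -X ω) ⁻¹' (Ici c)) := measure_union_le _ _
    _ ≤ ENNReal.ofReal (Real.sqrt v / c * Real.exp (-c^2 / (2*(v:ℝ))))
        + ENNReal.ofReal (Real.sqrt v / c * Real.exp (-c^2 / (2*(v:ℝ)))) := add_le_add h1 h2
    _ = ENNReal.ofReal (2 * (Real.sqrt v / c * Real.exp (-c^2 / (2*(v:ℝ))))) := by
        rw [← ENNReal.ofReal_add (by positivity) (by positivity)]; ring_nf

lemma my_increment_law {Ω : Type*} [MeasurableSpace Ω] {P : Measure Ω}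
    {H : ℝ} (hH0 : 0 < H) {B : ℝ → Ω → ℝ} (hB : IsFractionalBrownianMotion P H B)
    {t s : ℝ} (ht : 0 ≤ t) (hs : 0 ≤ s) :
    Measure.map (fun ω => B t ω - B s ω) P = gaussianReal 0 (|t - s| ^ (2*H)).toNNReal := by
  have key := hB.gaussian 2 ![t, s] ![1, -1] (by
    intro i; fin_cases i <;> simpa)
  have h0 : (0:ℝ) ^ (2*H) = 0 := Real.zero_rpow (by positivity)
  have hfun : (fun ω => ∑ i : Fin 2, (![1,-1] : Fin 2 → ℝ) i * B ((![t,s] : Fin 2 → ℝ) i) ω)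
      = (fun ω => B t ω - B s ω) := by
    funext ω
    simp [Fin.sum_univ_two]
    ring
  have hvar : (∑ i : Fin 2, ∑ j : Fin 2, (![1,-1] : Fin 2 → ℝ) i * (![1,-1] : Fin 2 → ℝ) j
      * fbmCov H ((![t,s] : Fin 2 → ℝ) i) ((![t,s] : Fin 2 → ℝ) j)) = |t - s| ^ (2*H) := by
    simp only [Fin.sum_univ_two, fbmCov, Matrix.cons_val_zero, Matrix.cons_val_one,
      Matrix.head_cons, sub_self, abs_zero, h0]
    rw [abs_sub_comm s t]
    ring
  rw [hfun, hvar] at key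
  exact key


lemma my_chain {f : ℝ → ℝ} (hf : ContinuousOn f (Ici 0)) (hf0 : f 0 = 0)
    {N : ℕ} {c : ℕ → ℝ} (hc : ∀ k, 0 ≤ c k) (hsum : Summable (fun k => c (k+1)))
    (hgrid : ∀ k : ℕ, ∀ j : ℕ, j + 1 ≤ N * 2^k →
      |f (((j:ℝ)+1)/2^k) - f ((j:ℝ)/2^k)| ≤ c k)
    {t : ℝ} (ht : 0 ≤ t) (htN : t ≤ N) :
    |f t| ≤ N * c 0 + ∑' k, c (k+1) := by
  set n : ℕ → ℕ := fun k => Nat.floor (t * 2^k) with hn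
  set u : ℕ → ℝ := fun k => (n k : ℝ)/2^k with hu
  have h2pos : ∀ k : ℕ, (0:ℝ) < 2^k := fun k => by positivity
  have hu_nonneg : ∀ k, 0 ≤ u k := fun k => by positivity
  have hu_le : ∀ k, u k ≤ t := by
    intro k
    rw [hu, div_le_iff₀ (h2pos k)]
    exact Nat.floor_le (by positivity)
  have hfl_lt : ∀ k, t * 2^k < (n k : ℝ) + 1 := by
    intro k
    have h := Nat.lt_floor_add_one (t * 2^k)
    push_cast at h ⊢
    exact h
  have hfl_le : ∀ k, (n k : ℝ) ≤ t * 2^k := fun k => Nat.floor_le (by positivity)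
  have hu_gt : ∀ k, t - 1/2^k < u k := by
    intro k
    rw [hu, lt_div_iff₀ (h2pos k)]
    have hexp : (t - 1/2^k) * 2^k = t * 2^k - 1 := by field_simp
    linarith [hfl_lt k]
  have hu_tend : Tendsto u atTop (nhds t) := by
    have hlow : Tendsto (fun k : ℕ => t - 1/2^k) atTop (nhds t) := by
      have h0 : Tendsto (fun k : ℕ => (1:ℝ)/2^k) atTop (nhds 0) := by
        have habs : |(1:ℝ)/2| < 1 := by rw [abs_of_pos] <;> norm_num
        have := tendsto_pow_atTop_nhds_zero_of_abs_lt_one habs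
        refine this.congr (fun k => ?_)
        rw [div_pow, one_pow]
      simpa using tendsto_const_nhds.sub h0
    exact tendsto_of_tendsto_of_tendsto_of_le_of_le hlow tendsto_const_nhds
      (fun k => (hu_gt k).le) hu_le
  have hn0_le : n 0 ≤ N := by
    rw [hn]
    simp only [pow_zero, mul_one]
    calc Nat.floor t ≤ Nat.floor (N:ℝ) := Nat.floor_le_floor htN
      _ = N := Nat.floor_natCast N
  have hfu0 : |f (u 0)| ≤ N * c 0 := by
    have htel : ∑ m ∈ Finset.range (n 0), (f ((m:ℝ)+1) - f (m:ℝ)) = f (n 0) - f 0 := by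
      have := Finset.sum_range_sub (fun m : ℕ => f (m:ℝ)) (n 0)
      simpa [Nat.cast_add, Nat.cast_one] using this
    have hu0 : u 0 = (n 0 : ℝ) := by rw [hu]; simp
    rw [hu0, show f ((n 0 : ℝ)) = ∑ m ∈ Finset.range (n 0), (f ((m:ℝ)+1) - f (m:ℝ)) by
      rw [htel, hf0, sub_zero]]
    calc |∑ m ∈ Finset.range (n 0), (f ((m:ℝ)+1) - f (m:ℝ))|
        ≤ ∑ m ∈ Finset.range (n 0), |f ((m:ℝ)+1) - f (m:ℝ)| := Finset.abs_sum_le_sum_abs _ _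
      _ ≤ ∑ m ∈ Finset.range (n 0), c 0 := by
          apply Finset.sum_le_sum
          intro m hm
          have hm' : m + 1 ≤ N * 2^0 := by
            simp only [pow_zero, mul_one]
            exact Nat.succ_le_of_lt ((Finset.mem_range.mp hm).trans_le hn0_le)
          have := hgrid 0 m hm'
          simpa using this
      _ = (n 0 : ℝ) * c 0 := by rw [Finset.sum_const, Finset.card_range]; ring
      _ ≤ N * c 0 := by
          apply mul_le_mul_of_nonneg_right _ (hc 0)
          exact_mod_cast hn0_le
  have hstep : ∀ k : ℕ, |f (u (k+1)) - f (u k)| ≤ c (k+1) := by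
    intro k
    have h1 : 2 * n k ≤ n (k+1) := by
      apply Nat.le_floor
      push_cast
      calc (2:ℝ) * (n k) ≤ 2 * (t * 2^k) := by linarith [hfl_le k]
        _ = t * 2^(k+1) := by ring
    have h2 : n (k+1) < 2 * n k + 2 := by
      apply (Nat.floor_lt (by positivity)).mpr
      push_cast
      calc t * 2^(k+1) = 2 * (t * 2^k) := by ring
        _ < 2 * ((n k : ℝ) + 1) := by linarith [hfl_lt k]
        _ = 2 * (n k : ℝ) + 2 := by ring
    have hcase : n (k+1) = 2 * n k ∨ n (k+1) = 2 * n k + 1 := by omega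
    have e2 : ((2 * n k : ℕ) : ℝ)/2^(k+1) = u k := by
      rw [hu]
      push_cast
      field_simp
      ring
    rcases hcase with hcase | hcase
    · have heq : u (k+1) = u k := by
        rw [hu]
        simp only
        rw [hcase]
        push_cast
        rw [pow_succ]
        field_simp
      rw [heq, sub_self, abs_zero]
      exact hc (k+1)
    · have hj : (2 * n k) + 1 ≤ N * 2^(k+1) := by
        have h1' : ((n (k+1) : ℝ)) ≤ t * 2^(k+1) := hfl_le (k+1)
        have h2' : t * 2^(k+1) ≤ (N:ℝ) * 2^(k+1) :=
          mul_le_mul_of_nonneg_right htN (h2pos (k+1)).le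
        have hle : ((2 * n k : ℕ) : ℝ) + 1 ≤ (N:ℝ) * 2^(k+1) := by
          rw [hcase] at h1'
          push_cast at h1' ⊢
          linarith
        exact_mod_cast hle
      have hg := hgrid (k+1) (2 * n k) hj
      have e1 : (((2 * n k : ℕ) : ℝ) + 1)/2^(k+1) = u (k+1) := by
        rw [hu]
        simp only
        rw [hcase]
        push_cast
        ring
      rw [e1, e2] at hg
      exact hg
  have hbound : ∀ K : ℕ, |f (u K)| ≤ N * c 0 + ∑' k, c (k+1) := by
    intro K
    have htel : f (u K) = f (u 0) + ∑ k ∈ Finset.range K, (f (u (k+1)) - f (u k)) := by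
      rw [Finset.sum_range_sub (fun k => f (u k))]
      ring
    rw [htel]
    calc |f (u 0) + ∑ k ∈ Finset.range K, (f (u (k+1)) - f (u k))|
        ≤ |f (u 0)| + |∑ k ∈ Finset.range K, (f (u (k+1)) - f (u k))| := abs_add_le _ _
      _ ≤ N * c 0 + ∑ k ∈ Finset.range K, c (k+1) := add_le_add hfu0
          ((Finset.abs_sum_le_sum_abs _ _).trans (Finset.sum_le_sum fun k _ => hstep k))
      _ ≤ N * c 0 + ∑' k, c (k+1) := by
          apply add_le_add_right
          exact Summable.sum_le_tsum _ (fun k _ => hc (k+1)) hsum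
  have hftend : Tendsto (fun K => f (u K)) atTop (nhds (f t)) := by
    have hcw : ContinuousWithinAt f (Ici 0) t := hf t ht
    exact hcw.tendsto.comp (tendsto_nhdsWithin_of_tendsto_nhds_of_eventually_within u hu_tend
      (Eventually.of_forall hu_nonneg))
  exact le_of_tendsto hftend.abs (Eventually.of_forall hbound)

noncomputable def mySigma (H : ℝ) (k : ℕ) : ℝ := ((1:ℝ)/2^k) ^ H
noncomputable def myLam (a : ℝ) (N : ℕ) : ℝ := 2 * Real.exp (a*N/4)
noncomputable def myC (H a : ℝ) (N k : ℕ) : ℝ := myLam a N * ((k:ℝ)+1) * mySigma H k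

def myBad {Ω : Type*} (B : ℝ → Ω → ℝ) (H a : ℝ) (N : ℕ) : Set Ω :=
  ⋃ k, ⋃ j ∈ Finset.range (N * 2^k),
    {ω | myC H a N k ≤ |B (((j:ℝ)+1)/2^k) ω - B ((j:ℝ)/2^k) ω|}

lemma mySigma_pos (H : ℝ) (k : ℕ) : 0 < mySigma H k :=
  Real.rpow_pos_of_pos (by positivity) _

lemma mySigma_sq (H : ℝ) (k : ℕ) : mySigma H k ^ 2 = ((1:ℝ)/2^k) ^ (2*H) := by
  rw [mySigma, show (2*H) = H*2 by ring, Real.rpow_mul (by positivity),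
    show ((2:ℝ) : ℝ) = ((2:ℕ):ℝ) by norm_num, Real.rpow_natCast]

lemma myLam_ge {a : ℝ} (ha : 0 ≤ a) (N : ℕ) : 2 ≤ myLam a N := by
  rw [myLam]
  nlinarith [Real.exp_pos (a*N/4), Real.one_le_exp (by positivity : (0:ℝ) ≤ a*N/4)]

lemma my_inc_tail {Ω : Type*} [MeasurableSpace Ω] {P : Measure Ω} [IsProbabilityMeasure P]
    {H : ℝ} (hH : H ∈ Set.Ioo (0:ℝ) 1) {B : ℝ → Ω → ℝ}
    (hB : IsFractionalBrownianMotion P H B) {a : ℝ} (ha : 0 < a) (N k j : ℕ) :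
    P {ω | myC H a N k ≤ |B (((j:ℝ)+1)/2^k) ω - B ((j:ℝ)/2^k) ω|}
      ≤ ENNReal.ofReal (2 * (Real.exp (-(myLam a N)^2/4) * Real.exp (-((k:ℝ)+1)))) := by
  have h2k : (0:ℝ) < 2^k := by positivity
  have hlaw := my_increment_law hH.1 hB
    (by positivity : (0:ℝ) ≤ ((j:ℝ)+1)/2^k) (by positivity : (0:ℝ) ≤ (j:ℝ)/2^k)
  have hdiff : |((j:ℝ)+1)/2^k - (j:ℝ)/2^k| = 1/2^k := by
    rw [div_sub_div_same, show ((j:ℝ)+1) - j = 1 by ring, abs_of_pos (by positivity)]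
  rw [hdiff] at hlaw
  have hvpos : (0:ℝ) < ((1:ℝ)/2^k) ^ (2*H) := Real.rpow_pos_of_pos (by positivity) _
  have hv : (((1:ℝ)/2^k) ^ (2*H)).toNNReal ≠ 0 := by
    rw [ne_eq, Real.toNNReal_eq_zero]
    exact not_le.mpr hvpos
  have hcoe : ((((1:ℝ)/2^k) ^ (2*H)).toNNReal : ℝ) = ((1:ℝ)/2^k) ^ (2*H) :=
    Real.coe_toNNReal _ hvpos.le
  have hcpos : 0 < myC H a N k := by
    have h1 := myLam_ge ha.le N
    have h2 := mySigma_pos H k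
    have h3 : (0:ℝ) < (k:ℝ) + 1 := by positivity
    rw [myC]
    exact mul_pos (mul_pos (by linarith) h3) h2
  have htail := my_map_tail hv hlaw hcpos
  refine htail.trans (ENNReal.ofReal_le_ofReal ?_)
  -- real arithmetic
  set lam := myLam a N with hlam
  set sig := mySigma H k with hsig
  have hsigpos : 0 < sig := mySigma_pos H k
  have hlam2 : 2 ≤ lam := myLam_ge ha.le N
  have hsqrt : Real.sqrt ((((1:ℝ)/2^k) ^ (2*H)).toNNReal : ℝ) = sig := by
    rw [hcoe, ← mySigma_sq, Real.sqrt_sq (mySigma_pos H k).le]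
  rw [hsqrt, hcoe, ← mySigma_sq H k]
  have hk1 : (1:ℝ) ≤ (k:ℝ) + 1 := le_add_of_nonneg_left (Nat.cast_nonneg k)
  have hlk : 2 ≤ lam * ((k:ℝ)+1) := by nlinarith
  have hfrac : sig / myC H a N k ≤ 1 := by
    rw [myC, ← hlam, ← hsig, div_le_one (by nlinarith [hsigpos, hlk])]
    nlinarith [hsigpos, hlk]
  have hexp : Real.exp (-(myC H a N k)^2 / (2 * (sig^2 : ℝ)))
      ≤ Real.exp (-(lam)^2/4) * Real.exp (-((k:ℝ)+1)) := by
    rw [← Real.exp_add]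
    apply Real.exp_le_exp.mpr
    rw [myC, ← hlam, ← hsig]
    have he : -(lam * ((k:ℝ)+1) * sig)^2 / (2 * sig^2) = -(lam^2 * ((k:ℝ)+1)^2)/2 := by
      field_simp
    rw [he]
    have hl4 : 4 ≤ lam^2 := by nlinarith
    have hm : (0:ℝ) ≤ 2*((k:ℝ)+1)^2 - 1 := by nlinarith
    nlinarith [mul_nonneg (sub_nonneg.mpr hl4) hm, hk1, hl4]
  calc 2 * (sig / myC H a N k * Real.exp (-(myC H a N k)^2 / (2 * (sig^2 : ℝ))))
      ≤ 2 * (1 * (Real.exp (-(lam)^2/4) * Real.exp (-((k:ℝ)+1)))) := by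
        apply mul_le_mul_of_nonneg_left _ (by norm_num)
        exact mul_le_mul hfrac hexp (Real.exp_pos _).le zero_le_one
      _ = 2 * (Real.exp (-(lam)^2/4) * Real.exp (-((k:ℝ)+1))) := by ring


lemma my_e_lt : 2 * Real.exp (-1) < 1 := by
  have h1 : (2:ℝ) < Real.exp 1 := by
    have := Real.exp_one_gt_d9
    linarith
  have hprod : Real.exp (-1) * Real.exp 1 = 1 := by
    rw [← Real.exp_add]; norm_num
  nlinarith [Real.exp_pos (-1)]

lemma myBad_bound {Ω : Type*} [MeasurableSpace Ω] {P : Measure Ω} [IsProbabilityMeasure P]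
    {H : ℝ} (hH : H ∈ Set.Ioo (0:ℝ) 1) {B : ℝ → Ω → ℝ}
    (hB : IsFractionalBrownianMotion P H B) {a : ℝ} (ha : 0 < a) (N : ℕ) :
    P (myBad B H a N) ≤ ENNReal.ofReal
      ((2*(N:ℝ)*Real.exp (-(myLam a N)^2/4) * Real.exp (-1)) * (1 - 2*Real.exp (-1))⁻¹) := by
  set E : ℝ := Real.exp (-(myLam a N)^2/4) with hE
  have hEpos : 0 < E := Real.exp_pos _
  set f : ℕ → ℝ := fun k => (N:ℝ)*2^k * (2 * (E * Real.exp (-((k:ℝ)+1)))) with hf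
  have hfk : ∀ k, f k = (2*(N:ℝ)*E*Real.exp (-1)) * (2*Real.exp (-1))^k := by
    intro k
    have e1 : Real.exp (-((k:ℝ)+1)) = Real.exp (-1) * Real.exp (-1)^k := by
      rw [← Real.exp_nat_mul, ← Real.exp_add]
      congr 1
      push_cast
      ring
    rw [hf]
    simp only
    rw [e1, mul_pow]
    ring
  have hq0 : (0:ℝ) ≤ 2*Real.exp (-1) := by positivity
  have hsumf : Summable f := by
    apply Summable.congr _ (fun k => (hfk k).symm)
    exact (summable_geometric_of_lt_one hq0 my_e_lt).mul_left _
  have htsumf : ∑' k, f k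
      = (2*(N:ℝ)*E*Real.exp (-1)) * (1 - 2*Real.exp (-1))⁻¹ := by
    rw [tsum_congr hfk, tsum_mul_left, tsum_geometric_of_lt_one hq0 my_e_lt]
  calc P (myBad B H a N)
      ≤ ∑' k, P (⋃ j ∈ Finset.range (N * 2^k),
          {ω | myC H a N k ≤ |B (((j:ℝ)+1)/2^k) ω - B ((j:ℝ)/2^k) ω|}) :=
        measure_iUnion_le _
    _ ≤ ∑' k, ENNReal.ofReal (f k) := by
        apply ENNReal.tsum_le_tsum
        intro k
        calc P (⋃ j ∈ Finset.range (N * 2^k),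
              {ω | myC H a N k ≤ |B (((j:ℝ)+1)/2^k) ω - B ((j:ℝ)/2^k) ω|})
            ≤ ∑ j ∈ Finset.range (N * 2^k),
              P {ω | myC H a N k ≤ |B (((j:ℝ)+1)/2^k) ω - B ((j:ℝ)/2^k) ω|} :=
              measure_biUnion_finset_le _ _
          _ ≤ ∑ _j ∈ Finset.range (N * 2^k),
              ENNReal.ofReal (2 * (E * Real.exp (-((k:ℝ)+1)))) :=
              Finset.sum_le_sum (fun j _ => my_inc_tail hH hB ha N k j)
          _ = (N * 2^k : ℕ) * ENNReal.ofReal (2 * (E * Real.exp (-((k:ℝ)+1)))) := by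
              rw [Finset.sum_const, Finset.card_range, nsmul_eq_mul]
          _ = ENNReal.ofReal (f k) := by
              rw [← ENNReal.ofReal_natCast, ← ENNReal.ofReal_mul (by positivity), hf]
              simp only
              push_cast
              ring_nf
    _ = ENNReal.ofReal (∑' k, f k) := by
        rw [ENNReal.ofReal_tsum_of_nonneg (fun k => by rw [hfk]; positivity) hsumf]
    _ ≤ _ := by
        rw [htsumf]


lemma my_bc {Ω : Type*} [MeasurableSpace Ω] {P : Measure Ω} [IsProbabilityMeasure P]
    {H : ℝ} (hH : H ∈ Set.Ioo (0:ℝ) 1) {B : ℝ → Ω → ℝ}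
    (hB : IsFractionalBrownianMotion P H B) {a : ℝ} (ha : 0 < a) :
    ∀ᵐ ω ∂P, ∀ᶠ N in atTop, ω ∉ myBad B H a N := by
  apply ae_eventually_notMem
  set g : ℕ → ℝ := fun N =>
    (2*(N:ℝ)*Real.exp (-(myLam a N)^2/4) * Real.exp (-1)) * (1 - 2*Real.exp (-1))⁻¹ with hg
  have hinv : (0:ℝ) < 1 - 2*Real.exp (-1) := by linarith [my_e_lt]
  have hgnonneg : ∀ N, 0 ≤ g N := fun N => by rw [hg]; positivity
  have hlamsq : ∀ N : ℕ, (myLam a N)^2 = 4 * Real.exp (a*N/2) := by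
    intro N
    rw [myLam, mul_pow, ← Real.exp_nat_mul]
    have h2 : ((2:ℕ):ℝ) * (a*N/4) = a*N/2 := by push_cast; ring
    rw [h2]
    norm_num
  have hexple : ∀ N : ℕ, Real.exp (-(myLam a N)^2/4)
      ≤ Real.exp (-1) * (Real.exp (-(a/2)))^N := by
    intro N
    rw [← Real.exp_nat_mul, ← Real.exp_add]
    apply Real.exp_le_exp.mpr
    rw [hlamsq]
    have h1 : a*N/2 + 1 ≤ Real.exp (a*N/2) := Real.add_one_le_exp _
    have : -(4 * Real.exp (a*N/2))/4 = -Real.exp (a*N/2) := by ring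
    rw [this]
    have : (-1:ℝ) + (N:ℝ) * -(a/2) = -(a*N/2 + 1) := by ring
    rw [this]
    linarith
  have hr : ‖Real.exp (-(a/2))‖ < 1 := by
    rw [Real.norm_eq_abs, abs_of_pos (Real.exp_pos _)]
    exact Real.exp_lt_one_iff.mpr (by linarith)
  set D : ℝ := (2 * Real.exp (-1) * Real.exp (-1)) * (1 - 2*Real.exp (-1))⁻¹ with hD
  have hgle : ∀ N, g N ≤ D * ((N:ℝ)^1 * (Real.exp (-(a/2)))^N) := by
    intro N
    rw [hg, hD]
    simp only [pow_one]
    have h2 := hexple N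
    have hNn : (0:ℝ) ≤ (N:ℝ) := Nat.cast_nonneg N
    have hb : 2*(N:ℝ)*Real.exp (-(myLam a N)^2/4) * Real.exp (-1)
        ≤ 2*(N:ℝ)*(Real.exp (-1) * (Real.exp (-(a/2)))^N) * Real.exp (-1) := by
      have := mul_le_mul_of_nonneg_left h2 (by positivity : (0:ℝ) ≤ 2*(N:ℝ))
      exact mul_le_mul_of_nonneg_right this (Real.exp_pos _).le
    calc 2*(N:ℝ)*Real.exp (-(myLam a N)^2/4) * Real.exp (-1) * (1 - 2*Real.exp (-1))⁻¹
        ≤ 2*(N:ℝ)*(Real.exp (-1) * (Real.exp (-(a/2)))^N) * Real.exp (-1)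
          * (1 - 2*Real.exp (-1))⁻¹ := by
          apply mul_le_mul_of_nonneg_right hb (by positivity)
      _ = 2 * Real.exp (-1) * Real.exp (-1) * (1 - 2*Real.exp (-1))⁻¹
          * ((N:ℝ) * (Real.exp (-(a/2)))^N) := by ring
  have hsummable : Summable g := by
    apply Summable.of_nonneg_of_le hgnonneg hgle
    exact ((summable_pow_mul_geometric_of_norm_lt_one 1 hr).mul_left D)
  have hle : ∑' N, P (myBad B H a N) ≤ ENNReal.ofReal (∑' N, g N) := by
    calc ∑' N, P (myBad B H a N) ≤ ∑' N, ENNReal.ofReal (g N) :=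
          ENNReal.tsum_le_tsum (fun N => myBad_bound hH hB ha N)
      _ = ENNReal.ofReal (∑' N, g N) := (ENNReal.ofReal_tsum_of_nonneg hgnonneg hsummable).symm
  exact ne_top_of_le_ne_top ENNReal.ofReal_ne_top hle


lemma mySigma_eq (H : ℝ) (k : ℕ) : mySigma H k = (((1:ℝ)/2)^H)^k := by
  rw [mySigma, show ((1:ℝ)/2^k) = ((1:ℝ)/2)^k by rw [div_pow, one_pow],
    ← Real.rpow_natCast ((1:ℝ)/2) k, ← Real.rpow_mul (by norm_num), mul_comm,
    Real.rpow_mul (by norm_num), Real.rpow_natCast]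

lemma mySigma_zero (H : ℝ) : mySigma H 0 = 1 := by
  rw [mySigma]
  norm_num

noncomputable def myCh (H : ℝ) : ℝ := ∑' k : ℕ, ((k:ℝ)+2) * mySigma H (k+1)

lemma myCh_summable {H : ℝ} (hH : H ∈ Set.Ioo (0:ℝ) 1) :
    Summable (fun k : ℕ => ((k:ℝ)+2) * mySigma H (k+1)) := by
  set ρ : ℝ := ((1:ℝ)/2)^H with hρ
  have hρ0 : 0 ≤ ρ := Real.rpow_nonneg (by norm_num) _
  have hρ1 : ρ < 1 := Real.rpow_lt_one (by norm_num) (by norm_num) hH.1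
  have h1 : Summable (fun k : ℕ => (k:ℝ)^1 * ρ^k) :=
    summable_pow_mul_geometric_of_norm_lt_one 1
      (by rwa [Real.norm_eq_abs, abs_of_nonneg hρ0])
  have h2 : Summable (fun k : ℕ => ρ^k) := summable_geometric_of_lt_one hρ0 hρ1
  refine ((h1.mul_left ρ).add (h2.mul_left (2*ρ))).congr (fun k => ?_)
  rw [mySigma_eq, ← hρ]
  ring

lemma myCh_nonneg {H : ℝ} (hH : H ∈ Set.Ioo (0:ℝ) 1) : 0 ≤ myCh H := by
  apply tsum_nonneg
  intro k
  have := mySigma_pos H (k+1)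
  positivity

lemma myC_nonneg {H a : ℝ} (ha : 0 ≤ a) (N k : ℕ) : 0 ≤ myC H a N k := by
  rw [myC]
  have h1 := myLam_ge ha N
  have h2 := mySigma_pos H k
  have h3 : (0:ℝ) < (k:ℝ)+1 := by positivity
  exact le_of_lt (mul_pos (mul_pos (by linarith) h3) h2)

lemma myC_succ_eq {H a : ℝ} (N k : ℕ) :
    myC H a N (k+1) = myLam a N * (((k:ℝ)+2) * mySigma H (k+1)) := by
  rw [myC]
  push_cast
  ring

lemma myC_succ_summable {H a : ℝ} (hH : H ∈ Set.Ioo (0:ℝ) 1) (N : ℕ) :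
    Summable (fun k => myC H a N (k+1)) := by
  refine ((myCh_summable hH).mul_left (myLam a N)).congr (fun k => ?_)
  rw [myC_succ_eq]

lemma myC_succ_tsum {H a : ℝ} (hH : H ∈ Set.Ioo (0:ℝ) 1) (N : ℕ) :
    ∑' k, myC H a N (k+1) = myLam a N * myCh H := by
  rw [tsum_congr (fun k => myC_succ_eq (H := H) (a := a) N k), tsum_mul_left, myCh]

lemma my_as_growth {Ω : Type*} [MeasurableSpace Ω] {P : Measure Ω} [IsProbabilityMeasure P]
    {H : ℝ} (hH : H ∈ Set.Ioo (0:ℝ) 1) {B : ℝ → Ω → ℝ}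
    (hB : IsFractionalBrownianMotion P H B) {a : ℝ} (ha : 0 < a) :
    ∀ᵐ ω ∂P, ∃ C : ℝ, 0 ≤ C ∧ ∀ s ∈ Ici (0:ℝ), |B s ω| ≤ C * Real.exp (a*s/2) := by
  filter_upwards [hB.cont, my_bc hH hB ha] with ω hcont hev
  obtain ⟨N₀, hN₀⟩ := eventually_atTop.mp hev
  have hCh := myCh_nonneg hH
  have hC0 : (0:ℝ) ≤ 2*(4/a + myCh H) * Real.exp (a*(N₀+1)/2) := by positivity
  refine ⟨2*(4/a + myCh H) * Real.exp (a*((N₀:ℝ)+1)/2), by positivity, ?_⟩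
  intro s hs
  have hs0 : (0:ℝ) ≤ s := hs
  set N : ℕ := max N₀ (Nat.ceil s) with hNdef
  have hsN : s ≤ (N:ℝ) := le_trans (Nat.le_ceil s) (Nat.cast_le.mpr (le_max_right _ _))
  have hgrid : ∀ k j : ℕ, j + 1 ≤ N * 2^k →
      |B (((j:ℝ)+1)/2^k) ω - B ((j:ℝ)/2^k) ω| ≤ myC H a N k := by
    intro k j hj
    by_contra hcon
    apply hN₀ N (le_max_left _ _)
    rw [myBad]
    refine mem_iUnion.mpr ⟨k, mem_iUnion₂.mpr ⟨j, Finset.mem_range.mpr (by omega), ?_⟩⟩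
    exact (not_le.mp hcon).le
  have hchain := my_chain hcont (hB.init ω) (fun k => myC_nonneg ha.le N k)
    (myC_succ_summable hH N) hgrid hs0 hsN
  rw [myC_succ_tsum hH N] at hchain
  have hCzero : myC H a N 0 = myLam a N := by
    rw [myC, mySigma_zero]
    norm_num
  rw [hCzero] at hchain
  -- now |B s ω| ≤ N * myLam a N + myLam a N * myCh H
  have hlam : myLam a N = 2 * Real.exp (a*N/4) := rfl
  have hexp1 : (1:ℝ) ≤ Real.exp (a*N/4) := Real.one_le_exp (by positivity)
  have hNle : (N:ℝ) ≤ (4/a) * Real.exp (a*N/4) := by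
    have h1 : a*N/4 ≤ Real.exp (a*N/4) := by
      have := Real.add_one_le_exp (a*(N:ℝ)/4)
      linarith
    calc (N:ℝ) = (4/a) * (a*N/4) := by field_simp
      _ ≤ (4/a) * Real.exp (a*N/4) := by
          apply mul_le_mul_of_nonneg_left h1 (by positivity)
  have hexpsq : Real.exp (a*N/4) * Real.exp (a*N/4) = Real.exp (a*N/2) := by
    rw [← Real.exp_add]
    congr 1
    ring
  have hstep1 : |B s ω| ≤ 2*(4/a + myCh H) * Real.exp (a*N/2) := by
    calc |B s ω| ≤ (N:ℝ) * myLam a N + myLam a N * myCh H := hchain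
      _ = myLam a N * ((N:ℝ) + myCh H) := by ring
      _ ≤ (2 * Real.exp (a*N/4)) * ((4/a) * Real.exp (a*N/4) + myCh H * Real.exp (a*N/4)) := by
          rw [hlam]
          apply mul_le_mul_of_nonneg_left _ (by positivity)
          have h2 : myCh H ≤ myCh H * Real.exp (a*N/4) := le_mul_of_one_le_right hCh hexp1
          linarith [hNle]
      _ = 2*(4/a + myCh H) * (Real.exp (a*N/4) * Real.exp (a*N/4)) := by ring
      _ = 2*(4/a + myCh H) * Real.exp (a*N/2) := by rw [hexpsq]
  have hNle2 : (N:ℝ) ≤ (N₀:ℝ) + s + 1 := by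
    have h1 : (N:ℝ) ≤ (N₀:ℝ) + (Nat.ceil s : ℝ) := by
      have : N ≤ N₀ + Nat.ceil s := max_le (Nat.le_add_right _ _) (Nat.le_add_left _ _)
      exact_mod_cast this
    have h2 : (Nat.ceil s : ℝ) ≤ s + 1 := (Nat.ceil_lt_add_one hs0).le
    linarith
  have hexp2 : Real.exp (a*N/2) ≤ Real.exp (a*((N₀:ℝ)+1)/2) * Real.exp (a*s/2) := by
    rw [← Real.exp_add]
    apply Real.exp_le_exp.mpr
    have := mul_le_mul_of_nonneg_left hNle2 ha.le
    linarith
  calc |B s ω| ≤ 2*(4/a + myCh H) * Real.exp (a*N/2) := hstep1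
    _ ≤ 2*(4/a + myCh H) * (Real.exp (a*((N₀:ℝ)+1)/2) * Real.exp (a*s/2)) := by
        apply mul_le_mul_of_nonneg_left hexp2 (by positivity)
    _ = 2*(4/a + myCh H) * Real.exp (a*((N₀:ℝ)+1)/2) * Real.exp (a*s/2) := by ring


lemma my_J_bound {Ω : Type*} {a : ℝ} (ha : 0 < a) {B : ℝ → Ω → ℝ} {ω : Ω}
    (hcont : ContinuousOn (fun t => B t ω) (Ici 0))
    {C : ℝ} (hC : 0 ≤ C) (hgrow : ∀ s ∈ Ici (0:ℝ), |B s ω| ≤ C * Real.exp (a*s/2))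
    {t : ℝ} (ht : 0 ≤ t) : fbmJ a B t ω ≤ 3*C := by
  have h1 : Real.exp (-(a*t)) * B t ω ≤ C := by
    calc Real.exp (-(a*t)) * B t ω ≤ Real.exp (-(a*t)) * |B t ω| :=
          mul_le_mul_of_nonneg_left (le_abs_self _) (Real.exp_pos _).le
      _ ≤ Real.exp (-(a*t)) * (C * Real.exp (a*t/2)) :=
          mul_le_mul_of_nonneg_left (hgrow t ht) (Real.exp_pos _).le
      _ = C * Real.exp (-(a*t) + a*t/2) := by rw [Real.exp_add]; ring
      _ ≤ C * 1 := mul_le_mul_of_nonneg_left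
          (Real.exp_le_one_iff.mpr (by nlinarith)) hC
      _ = C := mul_one C
  -- integrability
  have hcont1 : ContinuousOn (fun s => Real.exp (-(a*s)) * B s ω) (uIcc 0 t) := by
    rw [uIcc_of_le ht]
    exact (Real.continuous_exp.comp (by fun_prop)).continuousOn.mul
      (hcont.mono (Icc_subset_Ici_self))
  have hInt1 : IntervalIntegrable (fun s => Real.exp (-(a*s)) * B s ω) volume 0 t :=
    hcont1.intervalIntegrable
  have hInt2 : IntervalIntegrable (fun s => C * Real.exp (-(a/2)*s)) volume 0 t :=
    Continuous.intervalIntegrable (by fun_prop : Continuous fun s : ℝ => C * Real.exp (-(a/2)*s)) 0 t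
  -- value of the dominating integral
  have hderiv : ∀ s ∈ uIcc 0 t, HasDerivAt (fun s => -(2/a) * Real.exp (-(a/2)*s))
      (Real.exp (-(a/2)*s)) s := by
    intro s _
    have h := ((hasDerivAt_id s).const_mul (-(a/2))).exp.const_mul (-(2/a))
    refine h.congr_deriv ?_
    simp only [id]
    field_simp
  have hval : ∫ s in (0:ℝ)..t, Real.exp (-(a/2)*s)
      = -(2/a) * Real.exp (-(a/2)*t) + (2/a) := by
    rw [intervalIntegral.integral_eq_sub_of_hasDerivAt hderiv
      (Continuous.intervalIntegrable
        (by fun_prop : Continuous fun s : ℝ => Real.exp (-(a/2)*s)) 0 t)]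
    norm_num
  have h2 : |∫ s in (0:ℝ)..t, Real.exp (-(a*s)) * B s ω| ≤ C * (2/a) := by
    calc |∫ s in (0:ℝ)..t, Real.exp (-(a*s)) * B s ω|
        ≤ ∫ s in (0:ℝ)..t, |Real.exp (-(a*s)) * B s ω| :=
          intervalIntegral.abs_integral_le_integral_abs ht
      _ ≤ ∫ s in (0:ℝ)..t, C * Real.exp (-(a/2)*s) := by
          apply intervalIntegral.integral_mono_on ht hInt1.abs hInt2
          intro s hsIcc
          have hs0 : 0 ≤ s := hsIcc.1
          calc |Real.exp (-(a*s)) * B s ω| = Real.exp (-(a*s)) * |B s ω| := by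
                rw [abs_mul, abs_of_pos (Real.exp_pos _)]
            _ ≤ Real.exp (-(a*s)) * (C * Real.exp (a*s/2)) :=
                mul_le_mul_of_nonneg_left (hgrow s hs0) (Real.exp_pos _).le
            _ = C * Real.exp (-(a*s) + a*s/2) := by rw [Real.exp_add]; ring
            _ = C * Real.exp (-(a/2)*s) := by rw [show -(a*s) + a*s/2 = -(a/2)*s by ring]
      _ = C * (-(2/a) * Real.exp (-(a/2)*t) + (2/a)) := by
          rw [intervalIntegral.integral_const_mul, hval]
      _ ≤ C * (2/a) := by
          apply mul_le_mul_of_nonneg_left _ hC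
          nlinarith [Real.exp_pos (-(a/2)*t), div_pos (by norm_num : (0:ℝ) < 2) ha]
  have h3 : a * ∫ s in (0:ℝ)..t, Real.exp (-(a*s)) * B s ω ≤ a * (C * (2/a)) := by
    apply mul_le_mul_of_nonneg_left _ ha.le
    exact (le_abs_self _).trans h2
  have h4 : a * (C * (2/a)) = 2*C := by field_simp
  rw [fbmJ]
  linarith

/-- If `B^H` is a fractional Brownian motion with Hurst parameter `H ∈ (0,1)` and `a > 0`,
and `J_t = e^{−at} B^H_t + a ∫₀ᵗ e^{−as} B^H_s ds`, then almost surely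
`sup_{t ≥ 0} J_t < ∞`. -/
theorem sup_fbmJ_lt_top_of_pos_drift
    {Ω : Type*} [MeasurableSpace Ω] (P : Measure Ω) [IsProbabilityMeasure P]
    (H : ℝ) (hH : H ∈ Set.Ioo (0:ℝ) 1)
    (B : ℝ → Ω → ℝ) (hB : IsFractionalBrownianMotion P H B)
    (a : ℝ) (ha : 0 < a) :
    P {ω | (⨆ t ∈ Set.Ici (0:ℝ), ((fbmJ a B t ω : ℝ) : EReal)) < ⊤} = 1 := by
  have hae : ∀ᵐ ω ∂P, (⨆ t ∈ Set.Ici (0:ℝ), ((fbmJ a B t ω : ℝ) : EReal)) < ⊤ := by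
    filter_upwards [hB.cont, my_as_growth hH hB ha] with ω hcont hg
    obtain ⟨C, hC0, hgrow⟩ := hg
    have hsup : (⨆ t ∈ Set.Ici (0:ℝ), ((fbmJ a B t ω : ℝ) : EReal)) ≤ ((3*C : ℝ) : EReal) := by
      apply iSup₂_le
      intro t ht
      exact EReal.coe_le_coe_iff.mpr (my_J_bound ha hcont hC0 hgrow ht)
    exact lt_of_le_of_lt hsup (EReal.coe_lt_top _)
  set S := {ω | (⨆ t ∈ Set.Ici (0:ℝ), ((fbmJ a B t ω : ℝ) : EReal)) < ⊤} with hS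
  have h0 : P Sᶜ = 0 := by
    have h1 := ae_iff.mp hae
    convert h1 using 2
    rfl
  have h2 : P (S ∪ Sᶜ) ≤ P S + P Sᶜ := measure_union_le _ _
  rw [union_compl_self, measure_univ, h0, add_zero] at h2
  exact le_antisymm prob_le_one h2
end

section
/- Let H ∈ (0,1) and a > 0. Then the function V_t² := H ∫₀ᵗ z^{2H−1} ( e^{az − 2at} + e^{−az} ) dz satisfies lim_{t → ∞} V_t² = H Γ(2H) / a^{2H}, where Γ denotes the Gamma function. -/
open MeasureTheory Filter Set

/-- For `H ∈ (0,1)` and `a > 0`, the function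
`V_t² = H ∫₀ᵗ z^{2H−1}(e^{az−2at} + e^{−az}) dz` satisfies
`lim_{t→∞} V_t² = H Γ(2H)/a^{2H}`. -/
theorem variance_limit_at_infinity
    (H : ℝ) (hH : H ∈ Set.Ioo (0:ℝ) 1) (a : ℝ) (ha : 0 < a) :
    Filter.Tendsto
      (fun t : ℝ => H * ∫ z in (0:ℝ)..t,
        z ^ (2 * H - 1) * (Real.exp (a * z - 2 * a * t) + Real.exp (-(a * z))))
      Filter.atTop
      (nhds (H * Real.Gamma (2 * H) / a ^ (2 * H))) := by
  have h2H : 0 < 2*H := by linarith [hH.1]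
  have hexp : -1 < 2*H - 1 := by linarith
  have hrpow : ∀ t : ℝ, IntervalIntegrable (fun z : ℝ => z ^ (2*H-1)) volume 0 t :=
    fun t => intervalIntegral.intervalIntegrable_rpow' hexp
  have hA_int : ∀ t : ℝ, IntervalIntegrable
      (fun z : ℝ => z ^ (2*H-1) * Real.exp (a*z - 2*a*t)) volume 0 t := fun t =>
    (hrpow t).mul_continuousOn (Continuous.continuousOn (by continuity))
  have hB_int : ∀ t : ℝ, IntervalIntegrable
      (fun z : ℝ => z ^ (2*H-1) * Real.exp (-(a*z))) volume 0 t := fun t =>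
    (hrpow t).mul_continuousOn (Continuous.continuousOn (by continuity))
  -- the tail integral
  have hint : IntegrableOn (fun z : ℝ => z ^ (2*H-1) * Real.exp (-(a*z))) (Ioi 0) := by
    have := integrableOn_rpow_mul_exp_neg_mul_rpow (s := 2*H-1) (p := 1) (b := a)
      hexp zero_lt_one ha
    refine this.congr_fun (fun x hx => by beta_reduce; rw [Real.rpow_one]; ring_nf) measurableSet_Ioi
  have hval : ∫ z in Ioi (0:ℝ), z ^ (2*H-1) * Real.exp (-(a*z))
      = Real.Gamma (2*H) / a ^ (2*H) := by
    rw [show (2*H-1) = (2*H)-1 by ring, Real.integral_rpow_mul_exp_neg_mul_Ioi h2H ha,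
      Real.div_rpow zero_le_one ha.le, Real.one_rpow, div_mul_eq_mul_div, one_mul]
  have hB : Tendsto (fun t : ℝ => ∫ z in (0:ℝ)..t, z ^ (2*H-1) * Real.exp (-(a*z)))
      atTop (nhds (Real.Gamma (2*H) / a ^ (2*H))) := by
    rw [← hval]
    exact intervalIntegral_tendsto_integral_Ioi 0 hint tendsto_id
  -- first part tends to 0
  have hA : Tendsto (fun t : ℝ => ∫ z in (0:ℝ)..t, z ^ (2*H-1) * Real.exp (a*z - 2*a*t))
      atTop (nhds 0) := by
    have hg : Tendsto (fun t : ℝ => t ^ (2*H) * Real.exp (-a*t) / (2*H)) atTop (nhds 0) := by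
      have := (tendsto_rpow_mul_exp_neg_mul_atTop_nhds_zero (2*H) a ha).div_const (2*H)
      simpa using this
    refine squeeze_zero' ?_ ?_ hg
    · filter_upwards [eventually_ge_atTop (0:ℝ)] with t ht
      refine intervalIntegral.integral_nonneg ht (fun u hu => ?_)
      exact mul_nonneg (Real.rpow_nonneg hu.1 _) (Real.exp_pos _).le
    · filter_upwards [eventually_ge_atTop (0:ℝ)] with t ht
      have hle : (∫ z in (0:ℝ)..t, z ^ (2*H-1) * Real.exp (a*z - 2*a*t))
          ≤ ∫ z in (0:ℝ)..t, z ^ (2*H-1) * Real.exp (-(a*t)) := by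
        refine intervalIntegral.integral_mono_on ht (hA_int t)
          ((hrpow t).mul_const _) (fun u hu => ?_)
        refine mul_le_mul_of_nonneg_left ?_ (Real.rpow_nonneg hu.1 _)
        refine Real.exp_le_exp.mpr ?_
        nlinarith [hu.2, ha.le]
      refine hle.trans_eq ?_
      rw [intervalIntegral.integral_mul_const, integral_rpow (Or.inl hexp)]
      rw [show (2*H-1+1) = 2*H by ring, Real.zero_rpow h2H.ne']
      rw [Real.exp_neg, ← Real.exp_neg]
      ring_nf
  have hfin := ((hA.add hB).const_mul H)
  rw [zero_add] at hfin
  refine Tendsto.congr' ?_ (by simpa [mul_div_assoc] using hfin)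
  filter_upwards [eventually_ge_atTop (0:ℝ)] with t ht
  rw [← intervalIntegral.integral_add (hA_int t) (hB_int t)]
  congr 1
  refine intervalIntegral.integral_congr (fun z hz => ?_)
  ring
end

section
/- Let H ∈ [1/2, 1) and a > 0. Then the function V_t² := H ∫₀ᵗ z^{2H−1} ( e^{az − 2at} + e^{−az} ) dz is nondecreasing in t on [0, ∞), and sup_{t ≥ 0} V_t² = H Γ(2H) / a^{2H}, where Γ denotes the Gamma function. In particular, for all s > 0 one has s^{2H−1} e^{as} ≥ a ∫₀ˢ z^{2H−1} e^{az} dz. -/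
open MeasureTheory Filter Set Topology

/-- For `H ∈ [1/2, 1)` and `a > 0`, the function
`V_t² = H ∫₀ᵗ z^{2H−1}(e^{az−2at} + e^{−az}) dz` is nondecreasing in `t` on `[0,∞)`, its
supremum over `t ≥ 0` equals `H Γ(2H)/a^{2H}`, and in particular for all `s > 0` one has
`s^{2H−1} e^{as} ≥ a ∫₀ˢ z^{2H−1} e^{az} dz`. -/
theorem variance_monotone_and_sup
    (H : ℝ) (hH : H ∈ Set.Ico (1/2 : ℝ) 1) (a : ℝ) (ha : 0 < a) :
    MonotoneOn
      (fun t : ℝ => H * ∫ z in (0:ℝ)..t,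
        z ^ (2 * H - 1) * (Real.exp (a * z - 2 * a * t) + Real.exp (-(a * z))))
      (Set.Ici 0)
    ∧ (⨆ t : Set.Ici (0:ℝ), H * ∫ z in (0:ℝ)..(t : ℝ),
          z ^ (2 * H - 1) * (Real.exp (a * z - 2 * a * (t : ℝ)) + Real.exp (-(a * z))))
        = H * Real.Gamma (2 * H) / a ^ (2 * H)
    ∧ ∀ s > (0:ℝ),
        a * (∫ z in (0:ℝ)..s, z ^ (2 * H - 1) * Real.exp (a * z))
          ≤ s ^ (2 * H - 1) * Real.exp (a * s) := by
  obtain ⟨hH1, hH2⟩ := hH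
  have hp : (0:ℝ) ≤ 2 * H - 1 := by linarith
  have h2H : (0:ℝ) < 2 * H := by linarith
  set p : ℝ := 2 * H - 1 with hp_def
  have hcont1 : Continuous fun z : ℝ => z ^ p * Real.exp (a * z) :=
    (Real.continuous_rpow_const hp).mul
      (Real.continuous_exp.comp (continuous_const.mul continuous_id))
  have hcont2 : Continuous fun z : ℝ => z ^ p * Real.exp (-(a * z)) :=
    (Real.continuous_rpow_const hp).mul
      (Real.continuous_exp.comp ((continuous_const.mul continuous_id).neg))
  set F : ℝ → ℝ := fun t => ∫ z in (0:ℝ)..t, z ^ p * Real.exp (a * z) with hF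
  set G : ℝ → ℝ := fun t => ∫ z in (0:ℝ)..t, z ^ p * Real.exp (-(a * z)) with hG
  -- the key inequality (third conjunct)
  have key : ∀ s : ℝ, 0 ≤ s → a * F s ≤ s ^ p * Real.exp (a * s) := by
    intro s hs
    have hmono : F s ≤ ∫ z in (0:ℝ)..s, s ^ p * Real.exp (a * z) := by
      apply intervalIntegral.integral_mono_on hs (hcont1.intervalIntegrable _ _)
        ((continuous_const.mul
          (Real.continuous_exp.comp (continuous_const.mul continuous_id))).intervalIntegrable _ _)
      intro z hz
      exact mul_le_mul_of_nonneg_right (Real.rpow_le_rpow hz.1 hz.2 hp) (Real.exp_pos _).le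
    have hval : (∫ z in (0:ℝ)..s, Real.exp (a * z)) = a⁻¹ * (Real.exp (a * s) - 1) := by
      rw [intervalIntegral.integral_comp_mul_left (fun y => Real.exp y) ha.ne']
      simp [integral_exp]
    rw [intervalIntegral.integral_const_mul, hval] at hmono
    have hsp : (0:ℝ) ≤ s ^ p := Real.rpow_nonneg hs p
    calc a * F s ≤ a * (s ^ p * (a⁻¹ * (Real.exp (a * s) - 1))) :=
          mul_le_mul_of_nonneg_left hmono ha.le
      _ = s ^ p * (Real.exp (a * s) - 1) := by field_simp
      _ ≤ s ^ p * Real.exp (a * s) := by nlinarith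
  -- rewrite the main function
  set g : ℝ → ℝ := fun t => H * (Real.exp (-(2 * a) * t) * F t + G t) with hg
  have hfun : ∀ t : ℝ,
      (H * ∫ z in (0:ℝ)..t, z ^ p * (Real.exp (a * z - 2 * a * t) + Real.exp (-(a * z)))) = g t := by
    intro t
    have h1 : ∀ z : ℝ, z ^ p * (Real.exp (a * z - 2 * a * t) + Real.exp (-(a * z)))
        = Real.exp (-(2 * a) * t) * (z ^ p * Real.exp (a * z)) + z ^ p * Real.exp (-(a * z)) := by
      intro z
      have : Real.exp (a * z - 2 * a * t) = Real.exp (-(2 * a) * t) * Real.exp (a * z) := by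
        rw [← Real.exp_add]; ring_nf
      rw [this]; ring
    simp only [h1]
    rw [intervalIntegral.integral_add
        ((hcont1.intervalIntegrable _ _).const_mul _)
        (hcont2.intervalIntegrable _ _),
      intervalIntegral.integral_const_mul]
  -- derivative of g
  have hd : ∀ t : ℝ, HasDerivAt g
      (H * ((Real.exp (-(2 * a) * t) * -(2 * a)) * F t
        + Real.exp (-(2 * a) * t) * (t ^ p * Real.exp (a * t))
        + t ^ p * Real.exp (-(a * t)))) t := by
    intro t
    have hF' : HasDerivAt F (t ^ p * Real.exp (a * t)) t :=
      (hcont1.integral_hasStrictDerivAt 0 t).hasDerivAt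
    have hG' : HasDerivAt G (t ^ p * Real.exp (-(a * t))) t :=
      (hcont2.integral_hasStrictDerivAt 0 t).hasDerivAt
    have hE : HasDerivAt (fun t : ℝ => Real.exp (-(2 * a) * t))
        (Real.exp (-(2 * a) * t) * -(2 * a)) t := by
      have := ((hasDerivAt_id t).const_mul (-(2 * a))).exp
      simpa using this
    exact ((hE.mul hF').add hG').const_mul H
  -- nonnegativity of the derivative on [0,∞)
  have hd_nonneg : ∀ t : ℝ, 0 ≤ t →
      0 ≤ H * ((Real.exp (-(2 * a) * t) * -(2 * a)) * F t
        + Real.exp (-(2 * a) * t) * (t ^ p * Real.exp (a * t))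
        + t ^ p * Real.exp (-(a * t))) := by
    intro t ht
    apply mul_nonneg (by linarith)
    have hE0 : (0:ℝ) < Real.exp (-(2 * a) * t) := Real.exp_pos _
    have h2 : Real.exp (-(2 * a) * t) * (t ^ p * Real.exp (a * t))
        = t ^ p * Real.exp (-(a * t)) := by
      rw [show Real.exp (-(2 * a) * t) * (t ^ p * Real.exp (a * t))
          = t ^ p * (Real.exp (-(2 * a) * t) * Real.exp (a * t)) from by ring,
        ← Real.exp_add]
      ring_nf
    have hprod : Real.exp (-(2 * a) * t) * (a * F t)
        ≤ Real.exp (-(2 * a) * t) * (t ^ p * Real.exp (a * t)) :=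
      mul_le_mul_of_nonneg_left (key t ht) hE0.le
    nlinarith [hprod, h2]
  -- monotonicity
  have hmonog : MonotoneOn g (Set.Ici (0:ℝ)) := by
    apply monotoneOn_of_deriv_nonneg (convex_Ici 0)
    · have hFc : Continuous F :=
        intervalIntegral.continuous_primitive (fun u v => hcont1.intervalIntegrable u v) 0
      have hGc : Continuous G :=
        intervalIntegral.continuous_primitive (fun u v => hcont2.intervalIntegrable u v) 0
      exact (continuous_const.mul
        (((Real.continuous_exp.comp (continuous_const.mul continuous_id)).mul hFc).add hGc)).continuousOn
    · intro x _
      exact (hd x).differentiableAt.differentiableWithinAt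
    · intro x hx
      rw [interior_Ici] at hx
      rw [(hd x).deriv]
      exact hd_nonneg x (le_of_lt hx)
  have hmono : MonotoneOn
      (fun t : ℝ => H * ∫ z in (0:ℝ)..t,
        z ^ p * (Real.exp (a * z - 2 * a * t) + Real.exp (-(a * z)))) (Set.Ici 0) := by
    intro x hx y hy hxy
    simp only [hfun]
    exact hmonog hx hy hxy
  refine ⟨hmono, ?_, fun s hs => key s hs.le⟩
  -- the supremum
  have hInt2 : IntegrableOn (fun z : ℝ => z ^ p * Real.exp (-(a * z))) (Ioi 0) := by
    have h0 : IntegrableOn (fun x : ℝ => Real.exp (-x) * x ^ (2 * H - 1)) (Ioi 0) :=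
      Real.GammaIntegral_convergent h2H
    have h1 : IntegrableOn (fun z : ℝ => Real.exp (-(a * z)) * (a * z) ^ p) (Ioi 0) := by
      have := (integrableOn_Ioi_comp_mul_left_iff
        (fun x : ℝ => Real.exp (-x) * x ^ p) 0 ha).mpr (by simpa using h0)
      simpa using this
    have h2 : IntegrableOn (fun z : ℝ => (a ^ p)⁻¹ * (Real.exp (-(a * z)) * (a * z) ^ p)) (Ioi 0) :=
      h1.const_mul ((a ^ p)⁻¹)
    apply h2.congr_fun _ measurableSet_Ioi
    intro z hz
    have hz0 : (0:ℝ) < z := hz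
    have : (a * z) ^ p = a ^ p * z ^ p := Real.mul_rpow ha.le hz0.le
    have hap : (0:ℝ) < a ^ p := Real.rpow_pos_of_pos ha p
    field_simp [this]
    ring
    exact this
  have hGlim : Tendsto G atTop (𝓝 (Real.Gamma (2 * H) / a ^ (2 * H))) := by
    have h1 := MeasureTheory.intervalIntegral_tendsto_integral_Ioi 0 hInt2 tendsto_id
    have h2 : (∫ z in Ioi (0:ℝ), z ^ p * Real.exp (-(a * z)))
        = Real.Gamma (2 * H) / a ^ (2 * H) := by
      have := Real.integral_rpow_mul_exp_neg_mul_Ioi h2H ha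
      simp only [show (2:ℝ) * H - 1 = p from rfl] at this
      rw [this, one_div, Real.inv_rpow ha.le]
      ring
    rw [h2] at h1
    exact h1
  have hElim : Tendsto (fun t : ℝ => Real.exp (-(2 * a) * t) * F t) atTop (𝓝 0) := by
    have hup : Tendsto (fun t : ℝ => a⁻¹ * (t ^ p * Real.exp (-a * t))) atTop (𝓝 0) := by
      have := (tendsto_rpow_mul_exp_neg_mul_atTop_nhds_zero p a ha).const_mul a⁻¹
      simpa using this
    apply squeeze_zero' (g := fun t : ℝ => a⁻¹ * (t ^ p * Real.exp (-a * t))) _ _ hup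
    · filter_upwards [eventually_ge_atTop (0:ℝ)] with t ht
      exact mul_nonneg (Real.exp_pos _).le
        (intervalIntegral.integral_nonneg ht fun z hz =>
          mul_nonneg (Real.rpow_nonneg hz.1 _) (Real.exp_pos _).le)
    · filter_upwards [eventually_ge_atTop (0:ℝ)] with t ht
      have hk := key t ht
      have hE0 : (0:ℝ) < Real.exp (-(2 * a) * t) := Real.exp_pos _
      have h2 : Real.exp (-(2 * a) * t) * (t ^ p * Real.exp (a * t))
          = t ^ p * Real.exp (-a * t) := by
        rw [show Real.exp (-(2 * a) * t) * (t ^ p * Real.exp (a * t))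
            = t ^ p * (Real.exp (-(2 * a) * t) * Real.exp (a * t)) from by ring,
          ← Real.exp_add]
        ring_nf
      have hprod : Real.exp (-(2 * a) * t) * (a * F t)
          ≤ Real.exp (-(2 * a) * t) * (t ^ p * Real.exp (a * t)) :=
        mul_le_mul_of_nonneg_left hk hE0.le
      rw [h2] at hprod
      rw [← mul_le_mul_iff_right₀ ha]
      calc a * (Real.exp (-(2 * a) * t) * F t)
          = Real.exp (-(2 * a) * t) * (a * F t) := by ring
        _ ≤ t ^ p * Real.exp (-a * t) := hprod
        _ = a * (a⁻¹ * (t ^ p * Real.exp (-a * t))) := by field_simp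
  have hglim : Tendsto g atTop (𝓝 (H * Real.Gamma (2 * H) / a ^ (2 * H))) := by
    have := (hElim.add hGlim).const_mul H
    simp only [zero_add] at this
    convert this using 2
    ring
  -- pass to the subtype
  have hcoe : Tendsto (fun t : Set.Ici (0:ℝ) => (t : ℝ)) atTop atTop :=
    tendsto_atTop_atTop_of_monotone (fun x y h => h)
      (fun b => ⟨⟨max b 0, Set.mem_Ici.mpr (le_max_right _ _)⟩, le_max_left _ _⟩)
  have hmonoSub : Monotone (fun t : Set.Ici (0:ℝ) => g ↑t) :=
    fun x y hxy => hmonog x.2 y.2 hxy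
  have htendSub : Tendsto (fun t : Set.Ici (0:ℝ) => g ↑t) atTop
      (𝓝 (H * Real.Gamma (2 * H) / a ^ (2 * H))) := hglim.comp hcoe
  have := (isLUB_of_tendsto_atTop hmonoSub htendSub).ciSup_eq
  rw [← this]
  congr 1
  funext t
  exact hfun t
end
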